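/- arXiv:1004.4623 — 8 statements merged into one kernel-verified Lean document; each statement's English description precedes it below -/
import Mathlib

section
/- For every positive integer n, the number 2(2n+1)·binom(2n,n) divides binom(6n,3n)·binom(3n,n). -/
open Nat Finset

-- Core floor inequality for remainders
lemma core_ineq (q r : ℕ) (hq : 2 ≤ q) (hr : r < q) :
    (2 * r + 1) / q + 3 * r / q + 2 * r / q ≤ 6 * r / q := by
  have hq0 : 0 < q := by omega
  by_cases h1 : 2 * r + 1 < q
  · -- first term is 0
    rw [Nat.div_eq_of_lt h1]
    have h5 : 3 * r / q + 2 * r / q ≤ (3 * r + 2 * r) / q := Nat.add_div_le_add_div _ _ _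
    have h6 : (3 * r + 2 * r) / q ≤ 6 * r / q := Nat.div_le_div_right (by omega)
    omega
  · push_neg at h1
    by_cases h2 : q ≤ 2 * r
    · have e1 : (2 * r + 1) / q ≤ 1 := by
        rw [Nat.div_le_iff_le_mul_add_pred hq0]; omega
      have e3 : 2 * r / q ≤ 1 := by
        rw [Nat.div_le_iff_le_mul_add_pred hq0]; omega
      by_cases h3 : 2 * q ≤ 3 * r
      · have e2 : 3 * r / q ≤ 2 := by
          rw [Nat.div_le_iff_le_mul_add_pred hq0]; omega
        have e4 : 4 ≤ 6 * r / q := by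
          rw [Nat.le_div_iff_mul_le hq0]; omega
        omega
      · have e2 : 3 * r / q ≤ 1 := by
          rw [Nat.div_le_iff_le_mul_add_pred hq0]; omega
        have e4 : 3 ≤ 6 * r / q := by
          rw [Nat.le_div_iff_mul_le hq0]; omega
        omega
    · -- q = 2r + 1
      have hq' : q = 2 * r + 1 := by omega
      have hr1 : 1 ≤ r := by omega
      have e1 : (2 * r + 1) / q = 1 := by rw [hq', Nat.div_self (by omega)]
      have e2 : 3 * r / q ≤ 1 := by
        rw [Nat.div_le_iff_le_mul_add_pred hq0]; omega
      have e3 : 2 * r / q = 0 := Nat.div_eq_of_lt (by omega)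
      have e4 : 2 ≤ 6 * r / q := by
        rw [Nat.le_div_iff_mul_le hq0]; omega
      omega

-- Key inequality for all q ≥ 2
lemma key_ineq (q n : ℕ) (hq : 2 ≤ q) :
    (2 * n + 1) / q + 3 * n / q + 2 * n / q ≤ 6 * n / q + n / q := by
  have hq0 : 0 < q := by omega
  obtain ⟨m, r, hr, rfl⟩ : ∃ m r, r < q ∧ n = q * m + r :=
    ⟨n / q, n % q, Nat.mod_lt _ hq0, (Nat.div_add_mod n q).symm⟩
  have d1 : (2 * (q * m + r) + 1) / q = 2 * m + (2 * r + 1) / q := by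
    rw [show 2 * (q * m + r) + 1 = q * (2 * m) + (2 * r + 1) by ring, Nat.mul_add_div hq0]
  have d2 : (3 * (q * m + r)) / q = 3 * m + 3 * r / q := by
    rw [show 3 * (q * m + r) = q * (3 * m) + 3 * r by ring, Nat.mul_add_div hq0]
  have d3 : (2 * (q * m + r)) / q = 2 * m + 2 * r / q := by
    rw [show 2 * (q * m + r) = q * (2 * m) + 2 * r by ring, Nat.mul_add_div hq0]
  have d4 : (6 * (q * m + r)) / q = 6 * m + 6 * r / q := by
    rw [show 6 * (q * m + r) = q * (6 * m) + 6 * r by ring, Nat.mul_add_div hq0]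
  have d5 : (q * m + r) / q = m + r / q := by
    rw [Nat.mul_add_div hq0]
  have hr0 : r / q = 0 := Nat.div_eq_of_lt hr
  have := core_ineq q r hq hr
  omega

-- main factorial divisibility
lemma fact_dvd (n : ℕ) (hn : 0 < n) :
    2 * ((2 * n + 1)! * ((3 * n)! * (2 * n)!)) ∣ (6 * n)! * n ! := by
  have hL : 2 * ((2 * n + 1)! * ((3 * n)! * (2 * n)!)) ≠ 0 := by
    positivity
  have hR : (6 * n)! * n ! ≠ 0 := by positivity
  rw [← Nat.factorization_le_iff_dvd hL hR, Finsupp.le_def]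
  intro p
  by_cases hp : p.Prime
  · haveI : Fact p.Prime := ⟨hp⟩
    have hp2 : 2 ≤ p := hp.two_le
    have hfac : ∀ m : ℕ, Nat.log p m < 6 * n + 1 → padicValNat p (m !) =
        ∑ i ∈ Finset.Ico 1 (6 * n + 1), m / p ^ i := fun m hm => padicValNat_factorial hm
    have hlog : ∀ m : ℕ, m ≤ 6 * n → Nat.log p m < 6 * n + 1 := fun m hm =>
      lt_of_le_of_lt (Nat.log_le_self p m) (by omega)
    rw [Nat.factorization_def _ hp, Nat.factorization_def _ hp,
      padicValNat.mul (by positivity) (by positivity),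
      padicValNat.mul (by positivity) (by positivity),
      padicValNat.mul (by positivity) (by positivity),
      padicValNat.mul (by positivity) (by positivity),
      hfac _ (hlog _ (by omega)), hfac _ (hlog _ (by omega)),
      hfac _ (hlog _ (by omega)), hfac _ (hlog _ (by omega)),
      hfac _ (hlog _ (by omega))]
    rw [← Finset.sum_add_distrib, ← Finset.sum_add_distrib, ← Finset.sum_add_distrib]
    have hterm : ∀ i ∈ Finset.Ico 1 (6 * n + 1),
        (2 * n + 1) / p ^ i + (3 * n / p ^ i + 2 * n / p ^ i) ≤ 6 * n / p ^ i + n / p ^ i := by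
      intro i hi
      simp only [Finset.mem_Ico] at hi
      have hq : 2 ≤ p ^ i := le_trans hp2 (Nat.le_self_pow (by omega) p)
      have := key_ineq (p ^ i) n hq
      omega
    by_cases hp2' : p = 2
    · subst hp2'
      have hv2 : padicValNat 2 2 = 1 := padicValNat.self one_lt_two
      rw [hv2]
      -- need strict inequality of sums
      have hstrict : ∑ i ∈ Finset.Ico 1 (6 * n + 1),
          ((2 * n + 1) / 2 ^ i + (3 * n / 2 ^ i + 2 * n / 2 ^ i)) <
          ∑ i ∈ Finset.Ico 1 (6 * n + 1), (6 * n / 2 ^ i + n / 2 ^ i) := by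
        apply Finset.sum_lt_sum hterm
        refine ⟨Nat.log 2 (6 * n), ?_, ?_⟩
        · simp only [Finset.mem_Ico]
          constructor
          · exact Nat.le_log_of_pow_le one_lt_two (by omega)
          · have := Nat.log_le_self 2 (6 * n); omega
        · beta_reduce
          obtain ⟨q, hq3, hq1, hq2⟩ :
              ∃ q, 2 ^ Nat.log 2 (6 * n) = q ∧ q ≤ 6 * n ∧ 6 * n < 2 * q := by
            refine ⟨_, rfl, Nat.pow_log_le_self 2 (by omega), ?_⟩
            have := Nat.lt_pow_succ_log_self one_lt_two (6 * n)
            rw [pow_succ] at this; omega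
          rw [hq3]
          have h3n : 3 * n < q := by omega
          have e1 : (2 * n + 1) / q = 0 := Nat.div_eq_of_lt (by omega)
          have e2 : 3 * n / q = 0 := Nat.div_eq_of_lt (by omega)
          have e3 : 2 * n / q = 0 := Nat.div_eq_of_lt (by omega)
          have e4 : 1 ≤ 6 * n / q := by
            rw [Nat.le_div_iff_mul_le (by omega)]; omega
          rw [e1, e2, e3]
          have h5 : 1 ≤ 6 * n / q + n / q := le_trans e4 (Nat.le_add_right _ _)
          exact lt_of_lt_of_le Nat.zero_lt_one h5
      omega
    · have hv2 : padicValNat p 2 = 0 :=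
        padicValNat.eq_zero_of_not_dvd (fun h =>
          hp2' ((Nat.prime_dvd_prime_iff_eq hp Nat.prime_two).mp h))
      rw [hv2]
      simpa using Finset.sum_le_sum hterm
  · simp [Nat.factorization_eq_zero_of_not_prime _ hp]

theorem stmt_0 (n : ℕ) (hn : 0 < n) :
    2 * (2 * n + 1) * Nat.choose (2 * n) n ∣
      Nat.choose (6 * n) (3 * n) * Nat.choose (3 * n) n := by
  have e1 : Nat.choose (2 * n) n * n ! * n ! = (2 * n)! := by
    have h := Nat.choose_mul_factorial_mul_factorial (show n ≤ 2 * n by omega)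
    rwa [show 2 * n - n = n by omega] at h
  have e2 : Nat.choose (6 * n) (3 * n) * (3 * n)! * (3 * n)! = (6 * n)! := by
    have h := Nat.choose_mul_factorial_mul_factorial (show 3 * n ≤ 6 * n by omega)
    rwa [show 6 * n - 3 * n = 3 * n by omega] at h
  have e3 : Nat.choose (3 * n) n * n ! * (2 * n)! = (3 * n)! := by
    have h := Nat.choose_mul_factorial_mul_factorial (show n ≤ 3 * n by omega)
    rwa [show 3 * n - n = 2 * n by omega] at h
  have hC : ((3 * n)! * (2 * n)! * (n ! * n !)) ≠ 0 := by positivity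
  rw [← mul_dvd_mul_iff_right hC]
  have hDC : 2 * (2 * n + 1) * Nat.choose (2 * n) n * ((3 * n)! * (2 * n)! * (n ! * n !)) =
      2 * ((2 * n + 1)! * ((3 * n)! * (2 * n)!)) := by
    rw [Nat.factorial_succ (2 * n)]
    calc 2 * (2 * n + 1) * Nat.choose (2 * n) n * ((3 * n)! * (2 * n)! * (n ! * n !))
        = 2 * ((2 * n + 1) * ((Nat.choose (2 * n) n * n ! * n !) * ((3 * n)! * (2 * n)!))) := by
          ring
      _ = 2 * ((2 * n + 1) * (2 * n)! * ((3 * n)! * (2 * n)!)) := by rw [e1]; ring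
  have hMC : Nat.choose (6 * n) (3 * n) * Nat.choose (3 * n) n *
      ((3 * n)! * (2 * n)! * (n ! * n !)) = (6 * n)! * n ! := by
    calc Nat.choose (6 * n) (3 * n) * Nat.choose (3 * n) n *
        ((3 * n)! * (2 * n)! * (n ! * n !))
        = Nat.choose (6 * n) (3 * n) * (3 * n)! *
          (Nat.choose (3 * n) n * n ! * (2 * n)!) * n ! := by ring
      _ = Nat.choose (6 * n) (3 * n) * (3 * n)! * (3 * n)! * n ! := by rw [e3]
      _ = (6 * n)! * n ! := by rw [e2]
  rw [hDC, hMC]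
  exact fact_dvd n hn
end

section
/- For all nonnegative integers k and n, binom(2k,k) divides binom(4n+2k+2, 2n+k+1)·binom(2n+k+1, 2k)·binom(2n−k+1, n). -/
open Nat Finset

private lemma mod_cases3 {x q : ℕ} (_hq : 0 < q) (h : x < 3 * q) :
    x % q = x ∨ x % q + q = x ∨ x % q + 2 * q = x := by
  rcases Nat.lt_or_ge x q with h1 | h1
  · left; exact Nat.mod_eq_of_lt h1
  rcases Nat.lt_or_ge x (2 * q) with h2 | h2
  · right; left
    have e : x % q = (x - q) % q := Nat.mod_eq_sub_mod h1
    rw [e, Nat.mod_eq_of_lt (by omega)]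
    omega
  · right; right
    have e : x % q = (x - q) % q := Nat.mod_eq_sub_mod h1
    have e2 : (x - q) % q = (x - q - q) % q := Nat.mod_eq_sub_mod (by omega)
    rw [e, e2, Nat.mod_eq_of_lt (by omega)]
    omega

private lemma odd_key {q k n : ℕ} (hq2 : q % 2 = 1) (hq1 : 1 < q) (hk : k ≤ n + 1)
    (h : q ≤ k % q + k % q) :
    q ≤ (2 * n + k + 1) % q + (2 * n + k + 1) % q ∨
    q ≤ (2 * k) % q + (2 * n + 1 - k) % q ∨
    q ≤ n % q + (n + 1 - k) % q := by
  have hq0 : 0 < q := by omega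
  set K := k % q with hK
  set N := n % q with hN
  set D := (2 * n + 1 - k) % q with hD
  set E := (n + 1 - k) % q with hE
  set T := (2 * k) % q with hT
  set m1 := (2 * n + k + 1) % q with hm1
  have hKq : K < q := Nat.mod_lt _ hq0
  have hNq : N < q := Nat.mod_lt _ hq0
  have hDq : D < q := Nat.mod_lt _ hq0
  have hEq : E < q := Nat.mod_lt _ hq0
  have hTq : T < q := Nat.mod_lt _ hq0
  -- m1 ≡ 2N+K+1
  have cm1 : (2 * N + K + 1) % q = (2 * n + k + 1) % q :=
    (((Nat.mod_modEq n q).mul_left 2).add (Nat.mod_modEq k q)).add_right 1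
  have hm1' : m1 = (2 * N + K + 1) % q := by rw [cm1, hm1]
  have hcm : m1 = 2 * N + K + 1 ∨ m1 + q = 2 * N + K + 1 ∨ m1 + 2 * q = 2 * N + K + 1 := by
    rcases mod_cases3 hq0 (show 2 * N + K + 1 < 3 * q by omega) with h' | h' | h' <;>
      rw [← hm1'] at h' <;> omega
  -- T ≡ 2K
  have cT : (2 * K) % q = (2 * k) % q := (Nat.mod_modEq k q).mul_left 2
  have hT' : T = (2 * K) % q := by rw [cT, hT]
  have hcT : T = 2 * K ∨ T + q = 2 * K ∨ T + 2 * q = 2 * K := by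
    rcases mod_cases3 hq0 (show 2 * K < 3 * q by omega) with h' | h' | h' <;>
      rw [← hT'] at h' <;> omega
  -- D + K ≡ 2N + 1
  have cD : (D + K) % q = (2 * n + 1) % q := by
    have e : (2 * n + 1 - k) + k = 2 * n + 1 := by omega
    have := (Nat.mod_modEq (2 * n + 1 - k) q).add (Nat.mod_modEq k q)
    rw [e] at this
    exact this
  have cN2 : (2 * N + 1) % q = (2 * n + 1) % q :=
    ((Nat.mod_modEq n q).mul_left 2).add_right 1
  have hDK : (D + K) % q = (2 * N + 1) % q := by rw [cD, cN2]
  have hcD1 : (D + K) % q = D + K ∨ (D + K) % q + q = D + K ∨ (D + K) % q + 2 * q = D + K :=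
    mod_cases3 hq0 (by omega)
  have hcD2 : (2 * N + 1) % q = 2 * N + 1 ∨ (2 * N + 1) % q + q = 2 * N + 1 ∨
      (2 * N + 1) % q + 2 * q = 2 * N + 1 := mod_cases3 hq0 (by omega)
  -- E + K ≡ N + 1
  have cE : (E + K) % q = (n + 1) % q := by
    have e : (n + 1 - k) + k = n + 1 := by omega
    have := (Nat.mod_modEq (n + 1 - k) q).add (Nat.mod_modEq k q)
    rw [e] at this
    exact this
  have cN1 : (N + 1) % q = (n + 1) % q := (Nat.mod_modEq n q).add_right 1
  have hEK : (E + K) % q = (N + 1) % q := by rw [cE, cN1]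
  have hcE1 : (E + K) % q = E + K ∨ (E + K) % q + q = E + K ∨ (E + K) % q + 2 * q = E + K :=
    mod_cases3 hq0 (by omega)
  have hcE2 : (N + 1) % q = N + 1 ∨ (N + 1) % q + q = N + 1 ∨ (N + 1) % q + 2 * q = N + 1 :=
    mod_cases3 hq0 (by omega)
  omega

private lemma two_key {q k n : ℕ} (hq0 : 0 < q) (hk : k ≤ n + 1)
    (h : q ≤ k % q + k % q) :
    2 * q ≤ (2 * n + k + 1) % (2 * q) + (2 * n + k + 1) % (2 * q) ∨
    2 * q ≤ (2 * k) % (2 * q) + (2 * n + 1 - k) % (2 * q) := by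
  set Q := 2 * q with hQ
  have hQ0 : 0 < Q := by omega
  set m := (2 * n + k + 1) % Q with hm
  set D := (2 * n + 1 - k) % Q with hD
  have hT : (2 * k) % Q = 2 * (k % q) := Nat.mul_mod_mul_left 2 k q
  have hmQ : m < Q := Nat.mod_lt _ hQ0
  have hDQ : D < Q := Nat.mod_lt _ hQ0
  -- (2k % Q) + D ≡ m (mod Q)
  have csum : ((2 * k) % Q + D) % Q = m % Q := by
    have e : 2 * k + (2 * n + 1 - k) = 2 * n + k + 1 := by omega
    have h1 : ((2 * k) % Q + D) % Q = (2 * k + (2 * n + 1 - k)) % Q := by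
      rw [hD, ← Nat.add_mod]
    rw [h1, e, hm, Nat.mod_mod_of_dvd _ dvd_rfl]
  have hmm : m % Q = m := Nat.mod_eq_of_lt hmQ
  have hcs : ((2 * k) % Q + D) % Q = (2 * k) % Q + D ∨
      ((2 * k) % Q + D) % Q + Q = (2 * k) % Q + D ∨
      ((2 * k) % Q + D) % Q + 2 * Q = (2 * k) % Q + D := by
    apply mod_cases3 hQ0
    have : (2 * k) % Q < Q := Nat.mod_lt _ hQ0
    omega
  omega

private lemma key_val (p : ℕ) (hp : p.Prime) (k n : ℕ) (hk : k ≤ n + 1) :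
    padicValNat p (Nat.choose (k + k) k) ≤
      padicValNat p (Nat.choose ((2 * n + k + 1) + (2 * n + k + 1)) (2 * n + k + 1)) +
      padicValNat p (Nat.choose ((2 * n + 1 - k) + 2 * k) (2 * k)) +
      padicValNat p (Nat.choose ((n + 1 - k) + n) n) := by
  haveI : Fact p.Prime := ⟨hp⟩
  have hp1 : 1 < p := hp.one_lt
  set M := 2 * n + k + 1 with hM
  set b := Nat.log p (M + M) + 1 with hb
  have hbM : Nat.log p (M + M) < b := by omega
  have hb0 : Nat.log p (k + k) < b := lt_of_le_of_lt (Nat.log_mono_right (by omega)) hbM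
  have hb2 : Nat.log p ((2 * n + 1 - k) + 2 * k) < b :=
    lt_of_le_of_lt (Nat.log_mono_right (by omega)) hbM
  have hb3 : Nat.log p ((n + 1 - k) + n) < b :=
    lt_of_le_of_lt (Nat.log_mono_right (by omega)) hbM
  have hbM' : Nat.log p (M + M) < b + 1 := by omega
  have hb2' : Nat.log p ((2 * n + 1 - k) + 2 * k) < b + 1 := by omega
  have v0 := padicValNat_choose' (p := p) (k := k) (n := k) (b := b) hb0
  rcases hp.eq_two_or_odd with h2 | hodd
  · -- p = 2 : shift indices by one, use first two factors
    subst h2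
    have v1 := padicValNat_choose' (p := 2) (k := M) (n := M) (b := b + 1) hbM'
    have v2 := padicValNat_choose' (p := 2) (k := 2 * k) (n := 2 * n + 1 - k) (b := b + 1) hb2'
    rw [v0, v1, v2]
    have hsub : ((Finset.Ico 1 b).filter fun i => 2 ^ i ≤ k % 2 ^ i + k % 2 ^ i).image
          (· + 1) ⊆
        (((Finset.Ico 1 (b + 1)).filter fun i => 2 ^ i ≤ M % 2 ^ i + M % 2 ^ i) ∪
         ((Finset.Ico 1 (b + 1)).filter fun i =>
            2 ^ i ≤ (2 * k) % 2 ^ i + (2 * n + 1 - k) % 2 ^ i)) := by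
      intro j hj
      simp only [Finset.mem_image, Finset.mem_filter, Finset.mem_Ico, Finset.mem_union] at hj ⊢
      obtain ⟨i, ⟨⟨hi1, hib⟩, hcar⟩, rfl⟩ := hj
      have hq0 : 0 < 2 ^ i := Nat.pow_pos (by norm_num)
      have := two_key (q := 2 ^ i) (k := k) (n := n) hq0 hk hcar
      have epow : (2:ℕ) ^ (i + 1) = 2 * 2 ^ i := by rw [pow_succ]; ring
      rcases this with h' | h'
      · left
        refine ⟨⟨by omega, by omega⟩, ?_⟩
        rw [hM, epow]
        exact h'
      · right
        refine ⟨⟨by omega, by omega⟩, ?_⟩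
        rw [epow]
        exact h'
    have hinj : Set.InjOn (· + 1)
        ((Finset.Ico 1 b).filter fun i => 2 ^ i ≤ k % 2 ^ i + k % 2 ^ i : Finset ℕ) := by
      intro a _ c _ h
      simpa using h
    calc ((Finset.Ico 1 b).filter fun i => 2 ^ i ≤ k % 2 ^ i + k % 2 ^ i).card
        = (((Finset.Ico 1 b).filter fun i => 2 ^ i ≤ k % 2 ^ i + k % 2 ^ i).image
            (· + 1)).card := (Finset.card_image_of_injOn hinj).symm
      _ ≤ _ := by
          refine le_trans (Finset.card_le_card hsub) ?_
          refine le_trans (Finset.card_union_le _ _) ?_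
          omega
  · -- p odd : pointwise on carries with all three factors
    have v1 := padicValNat_choose' (p := p) (k := M) (n := M) (b := b) hbM
    have v2 := padicValNat_choose' (p := p) (k := 2 * k) (n := 2 * n + 1 - k) (b := b) hb2
    have v3 := padicValNat_choose' (p := p) (k := n) (n := n + 1 - k) (b := b) hb3
    rw [v0, v1, v2, v3]
    have hsub : ((Finset.Ico 1 b).filter fun i => p ^ i ≤ k % p ^ i + k % p ^ i) ⊆
        ((((Finset.Ico 1 b).filter fun i => p ^ i ≤ M % p ^ i + M % p ^ i) ∪
          ((Finset.Ico 1 b).filter fun i =>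
            p ^ i ≤ (2 * k) % p ^ i + (2 * n + 1 - k) % p ^ i)) ∪
          ((Finset.Ico 1 b).filter fun i => p ^ i ≤ n % p ^ i + (n + 1 - k) % p ^ i)) := by
      intro i hi
      simp only [Finset.mem_filter, Finset.mem_Ico, Finset.mem_union] at hi ⊢
      obtain ⟨⟨hi1, hib⟩, hcar⟩ := hi
      have hq1 : 1 < p ^ i := Nat.one_lt_pow (by omega) hp1
      have hq2 : p ^ i % 2 = 1 := by
        rw [Nat.pow_mod, hodd, one_pow]
        rfl
      have := odd_key (q := p ^ i) hq2 hq1 hk hcar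
      have e1 : 2 * n + k + 1 = M := rfl
      rcases this with h' | h' | h'
      · exact Or.inl (Or.inl ⟨⟨hi1, hib⟩, by rw [← e1]; exact h'⟩)
      · exact Or.inl (Or.inr ⟨⟨hi1, hib⟩, h'⟩)
      · exact Or.inr ⟨⟨hi1, hib⟩, h'⟩
    refine le_trans (Finset.card_le_card hsub) ?_
    refine le_trans (Finset.card_union_le _ _) ?_
    have := Finset.card_union_le
      (((Finset.Ico 1 b).filter fun i => p ^ i ≤ M % p ^ i + M % p ^ i))
      (((Finset.Ico 1 b).filter fun i =>
        p ^ i ≤ (2 * k) % p ^ i + (2 * n + 1 - k) % p ^ i))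
    omega

theorem stmt_1 (k n : ℕ) :
    Nat.choose (2 * k) k ∣
      Nat.choose (4 * n + 2 * k + 2) (2 * n + k + 1) *
        Nat.choose (2 * n + k + 1) (2 * k) *
        Nat.choose (2 * n + 1 - k) n := by
  by_cases hk : k ≤ n + 1
  · -- main case
    have e0 : 2 * k = k + k := by ring
    have e1 : 4 * n + 2 * k + 2 = (2 * n + k + 1) + (2 * n + k + 1) := by ring
    have e2 : 2 * n + k + 1 = (2 * n + 1 - k) + 2 * k := by omega
    have e3 : 2 * n + 1 - k = (n + 1 - k) + n := by omega
    conv_lhs => rw [e0]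
    rw [e1]
    nth_rewrite 4 [e2]
    nth_rewrite 2 [e3]
    have hA : Nat.choose ((2 * n + k + 1) + (2 * n + k + 1)) (2 * n + k + 1) ≠ 0 :=
      Nat.ne_of_gt (Nat.choose_pos (by omega))
    have hB : Nat.choose ((2 * n + 1 - k) + 2 * k) (2 * k) ≠ 0 :=
      Nat.ne_of_gt (Nat.choose_pos (by omega))
    have hC : Nat.choose ((n + 1 - k) + n) n ≠ 0 :=
      Nat.ne_of_gt (Nat.choose_pos (by omega))
    rw [Nat.dvd_iff_prime_pow_dvd_dvd]
    intro p m pp hdvd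
    have hp : p.Prime := pp
    haveI : Fact p.Prime := ⟨hp⟩
    have hck : Nat.choose (k + k) k ≠ 0 := Nat.ne_of_gt (Nat.choose_pos (by omega))
    rw [padicValNat_dvd_iff_le hck] at hdvd
    rw [padicValNat_dvd_iff_le (by positivity)]
    calc m ≤ padicValNat p (Nat.choose (k + k) k) := hdvd
      _ ≤ _ := key_val p hp k n hk
      _ = padicValNat p (Nat.choose ((2 * n + k + 1) + (2 * n + k + 1)) (2 * n + k + 1) *
            Nat.choose ((2 * n + 1 - k) + 2 * k) (2 * k) *
            Nat.choose ((n + 1 - k) + n) n) := by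
          rw [padicValNat.mul (mul_ne_zero hA hB) hC, padicValNat.mul hA hB]
  · -- degenerate case : some factor is zero
    by_cases h2 : k ≤ 2 * n + 1
    · have hz : Nat.choose (2 * n + 1 - k) n = 0 := Nat.choose_eq_zero_of_lt (by omega)
      simp [hz]
    · have hz : Nat.choose (2 * n + k + 1) (2 * k) = 0 := Nat.choose_eq_zero_of_lt (by omega)
      simp [hz]
end

section
/- Let m > 1 be an integer. Then for every integer n one has ⌊n/m⌋ + ⌊6n/m⌋ ≥ ⌊2n/m⌋ + ⌊(2n+1)/m⌋ + ⌊3n/m⌋. -/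
private lemma ediv_eq_of_bounds (m x k : ℤ) (hm : 0 < m) (h1 : k * m ≤ x)
    (h2 : x < (k + 1) * m) : x / m = k := by
  refine le_antisymm ?_ ?_
  · have := (Int.ediv_lt_iff_lt_mul hm (a := x) (b := k + 1)).2 h2
    omega
  · exact (Int.le_ediv_iff_mul_le hm).2 h1

private lemma key (m r : ℤ) (hm : 1 < m) (hr0 : 0 ≤ r) (hr : r < m) :
    2 * r / m + (2 * r + 1) / m + 3 * r / m ≤ 6 * r / m := by
  have hm0 : 0 < m := by omega
  rcases lt_or_ge (3 * r) m with h3 | h3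
  · -- C = 0, A = 0
    have hC : 3 * r / m = 0 := Int.ediv_eq_zero_of_lt (by omega) h3
    have hA : 2 * r / m = 0 := Int.ediv_eq_zero_of_lt (by omega) (by omega)
    rcases lt_or_ge (2 * r + 1) m with hB | hB
    · have hB' : (2 * r + 1) / m = 0 := Int.ediv_eq_zero_of_lt (by omega) hB
      have hD : (0 : ℤ) ≤ 6 * r / m := Int.ediv_nonneg (by omega) (by omega)
      omega
    · have hB' : (2 * r + 1) / m = 1 := ediv_eq_of_bounds m _ 1 hm0 (by omega) (by omega)
      have hD : (1 : ℤ) ≤ 6 * r / m := (Int.le_ediv_iff_mul_le hm0).2 (by omega)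
      omega
  · rcases lt_or_ge (3 * r) (2 * m) with h3' | h3'
    · -- C = 1
      have hC : 3 * r / m = 1 := ediv_eq_of_bounds m _ 1 hm0 (by omega) (by omega)
      rcases lt_or_ge (2 * r) m with h2 | h2
      · have hA : 2 * r / m = 0 := Int.ediv_eq_zero_of_lt (by omega) h2
        rcases lt_or_ge (2 * r + 1) m with hB | hB
        · have hB' : (2 * r + 1) / m = 0 := Int.ediv_eq_zero_of_lt (by omega) hB
          have hD : (1 : ℤ) ≤ 6 * r / m := (Int.le_ediv_iff_mul_le hm0).2 (by omega)
          omega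
        · -- 2r + 1 = m, so m is odd, m ≥ 3
          have hB' : (2 * r + 1) / m = 1 := ediv_eq_of_bounds m _ 1 hm0 (by omega) (by omega)
          have hD : (2 : ℤ) ≤ 6 * r / m := (Int.le_ediv_iff_mul_le hm0).2 (by omega)
          omega
      · have hA : 2 * r / m = 1 := ediv_eq_of_bounds m _ 1 hm0 (by omega) (by omega)
        have hB' : (2 * r + 1) / m = 1 := ediv_eq_of_bounds m _ 1 hm0 (by omega) (by omega)
        have hD : (3 : ℤ) ≤ 6 * r / m := (Int.le_ediv_iff_mul_le hm0).2 (by omega)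
        omega
    · -- C = 2
      have hC : 3 * r / m = 2 := ediv_eq_of_bounds m _ 2 hm0 (by omega) (by omega)
      have hA : 2 * r / m ≤ 1 := by
        have := (Int.ediv_lt_iff_lt_mul hm0 (a := 2 * r) (b := 2)).2 (by omega)
        omega
      have hB' : (2 * r + 1) / m ≤ 1 := by
        have := (Int.ediv_lt_iff_lt_mul hm0 (a := 2 * r + 1) (b := 2)).2 (by omega)
        omega
      have hD : (4 : ℤ) ≤ 6 * r / m := (Int.le_ediv_iff_mul_le hm0).2 (by omega)
      omega

private lemma floor_int_div (a m : ℤ) (hm : 0 < m) : ⌊(a : ℚ) / (m : ℚ)⌋ = a / m := by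
  have h1 : (m : ℚ) = ((m.toNat : ℕ) : ℚ) := by
    exact_mod_cast (Int.toNat_of_nonneg (by omega : (0:ℤ) ≤ m)).symm
  rw [h1, Rat.floor_intCast_div_natCast, Int.toNat_of_nonneg (by omega)]

theorem stmt_5 (m : ℤ) (hm : 1 < m) (n : ℤ) :
    ⌊(n : ℚ) / (m : ℚ)⌋ + ⌊(6 * (n : ℚ)) / (m : ℚ)⌋ ≥
      ⌊(2 * (n : ℚ)) / (m : ℚ)⌋ + ⌊(2 * (n : ℚ) + 1) / (m : ℚ)⌋ +
        ⌊(3 * (n : ℚ)) / (m : ℚ)⌋ := by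
  have hm0 : 0 < m := by omega
  have e1 := floor_int_div n m hm0
  have e6 := floor_int_div (6 * n) m hm0
  have e2 := floor_int_div (2 * n) m hm0
  have e2' := floor_int_div (2 * n + 1) m hm0
  have e3 := floor_int_div (3 * n) m hm0
  push_cast at e6 e2 e2' e3
  rw [e1, e6, e2, e2', e3]
  -- now pure integer statement
  obtain ⟨q, r, hn, hr0, hr⟩ : ∃ q r, n = m * q + r ∧ 0 ≤ r ∧ r < m :=
    ⟨n / m, n % m, (Int.mul_ediv_add_emod n m).symm, Int.emod_nonneg n (by omega),
      Int.emod_lt_of_pos n hm0⟩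
  have hk : ∀ k : ℤ, (k * n) / m = k * q + (k * r) / m := by
    intro k
    rw [hn]
    have : k * (m * q + r) = k * r + k * q * m := by ring
    rw [this, Int.add_mul_ediv_right _ _ (by omega : m ≠ 0)]
    ring
  have h2n1 : (2 * n + 1) / m = 2 * q + (2 * r + 1) / m := by
    rw [hn]
    have : 2 * (m * q + r) + 1 = (2 * r + 1) + 2 * q * m := by ring
    rw [this, Int.add_mul_ediv_right _ _ (by omega : m ≠ 0)]
    ring
  have hnn : n / m = q + r / m := by
    conv_lhs => rw [hn]
    have : m * q + r = r + q * m := by ring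
    rw [this, Int.add_mul_ediv_right _ _ (by omega : m ≠ 0)]
    ring
  have hr' : r / m = 0 := Int.ediv_eq_zero_of_lt hr0 hr
  have hkey := key m r hm hr0 hr
  rw [hnn, hk 6, hk 2, hk 3, h2n1, hr']
  omega
end

section
/- Let m be a positive integer and let k, n be integers. If it is not the case that m is even with k ≡ m/2 (mod m) and n+1 ≡ m/2 (mod m), then ⌊(4n+2k+2)/m⌋ − ⌊(2n+k+1)/m⌋ + 2⌊k/m⌋ − 2⌊2k/m⌋ ≥ ⌊n/m⌋ + ⌊(n−k+1)/m⌋. -/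
private lemma key' (m r s W V T U e1 e2 e3 e4 : ℤ) (hm : 0 < m)
    (hr0 : 0 ≤ r) (hr1 : r < m) (hs0 : 0 ≤ s) (hs1 : s < m)
    (hex : ¬(2 * r = m ∧ 2 * s + 2 = m))
    (hE1 : 4 * s + 2 * r + 2 = m * W + e1) (he10 : 0 ≤ e1) (he11 : e1 < m)
    (hE2 : 2 * s + r + 1 = m * V + e2) (he20 : 0 ≤ e2) (he21 : e2 < m)
    (hE3 : 2 * r = m * T + e3) (he30 : 0 ≤ e3) (he31 : e3 < m)
    (hE4 : s - r + 1 = m * U + e4) (he40 : 0 ≤ e4) (he41 : e4 < m) :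
    W - V - 2 * T ≥ U := by
  have hW0 : 0 ≤ W := by nlinarith
  have hW1 : W ≤ 5 := by nlinarith
  have hV0 : 0 ≤ V := by nlinarith
  have hV1 : V ≤ 2 := by nlinarith
  have hT0 : 0 ≤ T := by nlinarith
  have hT1 : T ≤ 1 := by nlinarith
  have hU0 : -1 ≤ U := by nlinarith
  have hU1 : U ≤ 1 := by nlinarith
  interval_cases T <;> interval_cases U <;> interval_cases V <;> interval_cases W <;> omega

theorem stmt_6 (m : ℤ) (hm : 0 < m) (k n : ℤ)
    (h : ¬ (Even m ∧ Int.ModEq m k (m / 2) ∧ Int.ModEq m (n + 1) (m / 2))) :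
    ⌊(4 * (n : ℚ) + 2 * (k : ℚ) + 2) / (m : ℚ)⌋ - ⌊(2 * (n : ℚ) + (k : ℚ) + 1) / (m : ℚ)⌋ +
        2 * ⌊(k : ℚ) / (m : ℚ)⌋ - 2 * ⌊(2 * (k : ℚ)) / (m : ℚ)⌋ ≥
      ⌊(n : ℚ) / (m : ℚ)⌋ + ⌊((n : ℚ) - (k : ℚ) + 1) / (m : ℚ)⌋ := by
  have c1 : (4 * (n : ℚ) + 2 * (k : ℚ) + 2) = ((4 * n + 2 * k + 2 : ℤ) : ℚ) := by push_cast; ring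
  have c2 : (2 * (n : ℚ) + (k : ℚ) + 1) = ((2 * n + k + 1 : ℤ) : ℚ) := by push_cast; ring
  have c3 : (2 * (k : ℚ)) = ((2 * k : ℤ) : ℚ) := by push_cast; ring
  have c4 : ((n : ℚ) - (k : ℚ) + 1) = ((n - k + 1 : ℤ) : ℚ) := by push_cast; ring
  rw [c1, c2, c3, c4, floor_int_div _ _ hm, floor_int_div _ _ hm, floor_int_div _ _ hm,
    floor_int_div _ _ hm, floor_int_div _ _ hm, floor_int_div _ _ hm]
  set r := k % m with hrdef
  set s := n % m with hsdef
  set q1 := k / m with hq1def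
  set q2 := n / m with hq2def
  have hk : k = m * q1 + r := (Int.mul_ediv_add_emod k m).symm
  have hn : n = m * q2 + s := (Int.mul_ediv_add_emod n m).symm
  have hr0 : 0 ≤ r := Int.emod_nonneg k hm.ne'
  have hr1 : r < m := Int.emod_lt_of_pos k hm
  have hs0 : 0 ≤ s := Int.emod_nonneg n hm.ne'
  have hs1 : s < m := Int.emod_lt_of_pos n hm
  -- rewrite each division
  have d1 : (4 * n + 2 * k + 2) / m = (4 * s + 2 * r + 2) / m + (4 * q2 + 2 * q1) := by
    rw [show 4 * n + 2 * k + 2 = (4 * s + 2 * r + 2) + (4 * q2 + 2 * q1) * m by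
      rw [hk, hn]; ring]
    exact Int.add_mul_ediv_right _ _ hm.ne'
  have d2 : (2 * n + k + 1) / m = (2 * s + r + 1) / m + (2 * q2 + q1) := by
    rw [show 2 * n + k + 1 = (2 * s + r + 1) + (2 * q2 + q1) * m by rw [hk, hn]; ring]
    exact Int.add_mul_ediv_right _ _ hm.ne'
  have d3 : (2 * k) / m = (2 * r) / m + 2 * q1 := by
    rw [show 2 * k = 2 * r + 2 * q1 * m by rw [hk]; ring]
    exact Int.add_mul_ediv_right _ _ hm.ne'
  have d4 : (n - k + 1) / m = (s - r + 1) / m + (q2 - q1) := by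
    rw [show n - k + 1 = (s - r + 1) + (q2 - q1) * m by rw [hk, hn]; ring]
    exact Int.add_mul_ediv_right _ _ hm.ne'
  rw [d1, d2, d3, d4]
  have hex : ¬(2 * r = m ∧ 2 * s + 2 = m) := by
    rintro ⟨h1, h2⟩
    apply h
    refine ⟨⟨r, by omega⟩, ?_, ?_⟩
    · rw [Int.modEq_iff_dvd]
      have : m / 2 = r := by omega
      rw [this]
      exact ⟨-q1, by rw [hk]; ring⟩
    · rw [Int.modEq_iff_dvd]
      have : m / 2 = r := by omega
      rw [this]
      have hsr : r = s + 1 := by omega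
      exact ⟨-q2, by rw [hn, hsr]; ring⟩
  have key := key' m r s ((4 * s + 2 * r + 2) / m) ((2 * s + r + 1) / m) ((2 * r) / m)
      ((s - r + 1) / m) ((4 * s + 2 * r + 2) % m) ((2 * s + r + 1) % m) ((2 * r) % m)
      ((s - r + 1) % m) hm hr0 hr1 hs0 hs1 hex
      (Int.mul_ediv_add_emod _ _).symm (Int.emod_nonneg _ hm.ne') (Int.emod_lt_of_pos _ hm)
      (Int.mul_ediv_add_emod _ _).symm (Int.emod_nonneg _ hm.ne') (Int.emod_lt_of_pos _ hm)
      (Int.mul_ediv_add_emod _ _).symm (Int.emod_nonneg _ hm.ne') (Int.emod_lt_of_pos _ hm)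
      (Int.mul_ediv_add_emod _ _).symm (Int.emod_nonneg _ hm.ne') (Int.emod_lt_of_pos _ hm)
  linarith
end

section
/- Let m be an even positive integer and let k, n be integers with k ≡ m/2 (mod m) and n+1 ≡ m/2 (mod m). Then ⌊n/m⌋ + ⌊(n−k+1)/m⌋ = ⌊(4n+2k+2)/m⌋ − ⌊(2n+k+1)/m⌋ + 2⌊k/m⌋ − 2⌊2k/m⌋ + 1. -/
lemma fl (a b : ℤ) (hb : 0 < b) : ⌊(a:ℚ)/(b:ℚ)⌋ = a / b := by
  obtain ⟨c, rfl⟩ : ∃ c : ℕ, b = (c : ℤ) := ⟨b.toNat, (Int.toNat_of_nonneg hb.le).symm⟩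
  exact_mod_cast Rat.floor_intCast_div_natCast a c

theorem stmt_7 (m : ℤ) (hm : 0 < m) (hme : Even m) (k n : ℤ)
    (hk : Int.ModEq m k (m / 2)) (hn : Int.ModEq m (n + 1) (m / 2)) :
    ⌊(n : ℚ) / (m : ℚ)⌋ + ⌊((n : ℚ) - (k : ℚ) + 1) / (m : ℚ)⌋ =
      ⌊(4 * (n : ℚ) + 2 * (k : ℚ) + 2) / (m : ℚ)⌋ - ⌊(2 * (n : ℚ) + (k : ℚ) + 1) / (m : ℚ)⌋ +
        2 * ⌊(k : ℚ) / (m : ℚ)⌋ - 2 * ⌊(2 * (k : ℚ)) / (m : ℚ)⌋ + 1 := by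
  obtain ⟨t, rfl⟩ := hme
  have ht : 0 < t := by omega
  have h2 : (t + t) / 2 = t := by omega
  rw [h2] at hk hn
  obtain ⟨a, ha⟩ := (Int.modEq_iff_dvd.mp hk)
  obtain ⟨b, hb⟩ := (Int.modEq_iff_dvd.mp hn)
  -- ha : t - k = (t+t) * a, hb : t - (n+1) = (t+t)*b
  have hk' : k = t + (t+t) * (-a) := by linarith
  have hn' : n = (t - 1) + (t+t) * (-b) := by linarith
  set A := -a; set B := -b
  have e1 : ⌊(n : ℚ) / ((t+t : ℤ) : ℚ)⌋ = B := by
    rw [fl n (t+t) (by omega), hn', Int.add_mul_ediv_left _ _ (by omega : (t+t:ℤ) ≠ 0),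
      Int.ediv_eq_zero_of_lt (by omega) (by omega)]; ring
  have e2 : ((n : ℚ) - k + 1) = ((n - k + 1 : ℤ) : ℚ) := by push_cast; ring
  have e2' : ⌊((n : ℚ) - k + 1) / ((t+t : ℤ) : ℚ)⌋ = B - A := by
    rw [e2, fl _ _ (by omega)]
    have : n - k + 1 = (t+t) * (B - A) := by rw [hn', hk']; ring
    rw [this, Int.mul_ediv_cancel_left _ (by omega)]
  have e3 : (4 * (n : ℚ) + 2 * k + 2) = ((4*n + 2*k + 2 : ℤ) : ℚ) := by push_cast; ring
  have e3' : ⌊(4 * (n : ℚ) + 2 * k + 2) / ((t+t : ℤ) : ℚ)⌋ = 4*B + 2*A + 2 := by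
    rw [e3, fl _ _ (by omega)]
    have : 4*n + 2*k + 2 = (t + t - 2) + (t+t) * (4*B + 2*A + 2) := by rw [hn', hk']; ring
    rw [this, Int.add_mul_ediv_left _ _ (by omega : (t+t:ℤ) ≠ 0),
      Int.ediv_eq_zero_of_lt (by omega) (by omega)]; ring
  have e4 : (2 * (n : ℚ) + k + 1) = ((2*n + k + 1 : ℤ) : ℚ) := by push_cast; ring
  have e4' : ⌊(2 * (n : ℚ) + k + 1) / ((t+t : ℤ) : ℚ)⌋ = 2*B + A + 1 := by
    rw [e4, fl _ _ (by omega)]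
    have : 2*n + k + 1 = (t-1) + (t+t) * (2*B + A + 1) := by rw [hn', hk']; ring
    rw [this, Int.add_mul_ediv_left _ _ (by omega : (t+t:ℤ) ≠ 0),
      Int.ediv_eq_zero_of_lt (by omega) (by omega)]; ring
  have e5 : ⌊(k : ℚ) / ((t+t : ℤ) : ℚ)⌋ = A := by
    rw [fl _ _ (by omega), hk', Int.add_mul_ediv_left _ _ (by omega : (t+t:ℤ) ≠ 0),
      Int.ediv_eq_zero_of_lt (by omega) (by omega)]; ring
  have e6 : (2 * (k:ℚ)) = ((2*k : ℤ) : ℚ) := by push_cast; ring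
  have e6' : ⌊(2 * (k : ℚ)) / ((t+t : ℤ) : ℚ)⌋ = 2*A + 1 := by
    rw [e6, fl _ _ (by omega)]
    have : 2*k = (t+t) * (2*A + 1) := by rw [hk']; ring
    rw [this, Int.mul_ediv_cancel_left _ (by omega)]
  rw [e1, e2', e3', e4', e5, e6']
  ring
end

section
/- For every odd prime p, one has S_p ≡ 15 − 30p + 60p^2 (mod p^3), where S_p is the integer binom(6p,3p)·binom(3p,p) / (2(2p+1)·binom(2p,p)). -/
open Finset Nat

lemma aux_prod_one_add {R : Type*} [CommRing R] (e : R) (he : e ^ 3 = 0)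
    (s : Finset ℕ) (y : ℕ → R) :
    2 * ∏ i ∈ s, (1 + e * y i) =
      2 + 2 * e * (∑ i ∈ s, y i) +
        e ^ 2 * ((∑ i ∈ s, y i) ^ 2 - ∑ i ∈ s, (y i) ^ 2) := by
  induction s using Finset.cons_induction with
  | empty => simp
  | cons a s ha ih =>
    rw [Finset.prod_cons, Finset.sum_cons, Finset.sum_cons]
    linear_combination (1 + e * y a) * ih +
      (y a * ((∑ i ∈ s, y i) ^ 2 - ∑ i ∈ s, (y i) ^ 2)) * he

lemma aux_sum_zmod {M : Type*} [AddCommMonoid M] (p : ℕ) [NeZero p] (f : ZMod p → M) :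
    ∑ i ∈ range p, f (i : ZMod p) = ∑ x : ZMod p, f x := by
  refine Finset.sum_nbij' (fun i => ((i : ZMod p))) (fun x => x.val) ?_ ?_ ?_ ?_ ?_
  · intro a _; exact mem_univ _
  · intro x _; exact mem_range.2 x.val_lt
  · intro a ha; exact ZMod.val_cast_of_lt (mem_range.1 ha)
  · intro x _; exact ZMod.natCast_zmod_val x
  · intro a _; rfl

lemma aux_coprime {p : ℕ} (hp : p.Prime) (i : ℕ) (h1 : 0 < i) (h2 : i < p) :
    Nat.Coprime i (p^3) := by
  refine Nat.Coprime.pow_right _ ?_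
  refine Nat.coprime_comm.mp ((Nat.Prime.coprime_iff_not_dvd hp).mpr ?_)
  intro hdvd
  exact absurd (Nat.le_of_dvd h1 hdvd) (by omega)

lemma aux_unit {p : ℕ} (hp : p.Prime) (i : ℕ) (h1 : 0 < i) (h2 : i < p) :
    IsUnit ((i : ℕ) : ZMod (p^3)) := by
  rw [ZMod.isUnit_iff_coprime]
  exact aux_coprime hp i h1 h2

lemma aux_kill {p : ℕ} (hp : p.Prime) (x : ZMod (p^3))
    (hx : ZMod.castHom (dvd_pow_self p three_ne_zero) (ZMod p) x = 0) :
    (p : ZMod (p^3))^2 * x = 0 := by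
  haveI : NeZero (p^3) := ⟨pow_ne_zero _ hp.ne_zero⟩
  haveI : NeZero p := ⟨hp.ne_zero⟩
  have hxval : ((x.val : ℕ) : ZMod (p^3)) = x := ZMod.natCast_zmod_val x
  have h2 : ((x.val : ℕ) : ZMod p) = 0 := by
    rw [← map_natCast (ZMod.castHom (dvd_pow_self p three_ne_zero) (ZMod p)) x.val, hxval, hx]
  rw [ZMod.natCast_eq_zero_iff] at h2
  obtain ⟨m, hm⟩ := h2
  have hp3 : ((p : ZMod (p^3)))^3 = 0 := by rw [← Nat.cast_pow, ZMod.natCast_self]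
  calc (p : ZMod (p^3))^2 * x = (p : ZMod (p^3))^2 * ((x.val : ℕ) : ZMod (p^3)) := by
        rw [hxval]
    _ = (p : ZMod (p^3))^3 * (m : ZMod (p^3)) := by rw [hm]; push_cast; ring
    _ = 0 := by rw [hp3, zero_mul]

lemma aux_phi_inv {p : ℕ} (hp : p.Prime) (x : ZMod (p^3)) (hx : IsUnit x) :
    ZMod.castHom (dvd_pow_self p three_ne_zero) (ZMod p) x⁻¹
      = (ZMod.castHom (dvd_pow_self p three_ne_zero) (ZMod p) x)⁻¹ := by
  haveI : Fact p.Prime := ⟨hp⟩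
  symm
  apply inv_eq_of_mul_eq_one_right
  rw [← map_mul, ZMod.mul_inv_of_unit x hx, map_one]

lemma aux_sq_sum_zmodp {p : ℕ} (hp : p.Prime) (hp5 : 5 ≤ p) :
    ∑ j ∈ range (p-1), (((j+1 : ℕ) : ZMod p)⁻¹)^2 = 0 := by
  haveI : Fact p.Prime := ⟨hp⟩
  haveI : NeZero p := ⟨hp.ne_zero⟩
  have h0 := Finset.sum_range_succ' (fun i => (((i : ℕ) : ZMod p)⁻¹)^2) (p-1)
  rw [show p - 1 + 1 = p from by omega] at h0
  have h1 : ∑ i ∈ range p, (((i : ℕ) : ZMod p)⁻¹)^2 = ∑ x : ZMod p, (x⁻¹)^2 :=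
    aux_sum_zmod p (fun x => (x⁻¹)^2)
  have h2 : ∑ x : ZMod p, (x⁻¹)^2 = ∑ x : ZMod p, x^2 :=
    Fintype.sum_bijective Inv.inv inv_involutive.bijective _ _ (fun x => rfl)
  have h3 : ∑ x : ZMod p, x^2 = 0 := by
    apply FiniteField.sum_pow_lt_card_sub_one
    rw [ZMod.card]; omega
  have h4 : (((0:ℕ) : ZMod p)⁻¹)^2 = 0 := by norm_num
  rw [h4, add_zero] at h0
  rw [← h0, h1, h2, h3]

lemma aux_H2 {p : ℕ} (hp : p.Prime) (hp5 : 5 ≤ p) :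
    (p : ZMod (p^3))^2 * ∑ j ∈ range (p-1), (((j+1 : ℕ) : ZMod (p^3))⁻¹)^2 = 0 := by
  haveI : Fact p.Prime := ⟨hp⟩
  apply aux_kill hp
  rw [map_sum]
  rw [← aux_sq_sum_zmodp hp hp5]
  apply Finset.sum_congr rfl
  intro j hj
  simp only [mem_range] at hj
  rw [map_pow, aux_phi_inv hp _ (aux_unit hp (j+1) (by omega) (by omega)), map_natCast]

lemma aux_H {p : ℕ} (hp : p.Prime) (hp5 : 5 ≤ p) :
    (p : ZMod (p^3)) * ∑ j ∈ range (p-1), (((j+1 : ℕ) : ZMod (p^3))⁻¹) = 0 := by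
  have hH2z := aux_H2 hp hp5
  set R := ZMod (p^3)
  set e : R := (p : R) with he
  have hunit : ∀ j ∈ range (p-1), IsUnit (((j+1 : ℕ) : R)) := by
    intro j hj; simp only [mem_range] at hj
    exact aux_unit hp (j+1) (by omega) (by omega)
  have hbunit : ∀ j ∈ range (p-1), IsUnit (((p-1-j : ℕ) : R)) := by
    intro j hj; simp only [mem_range] at hj
    exact aux_unit hp (p-1-j) (by omega) (by omega)
  set H := ∑ j ∈ range (p-1), (((j+1 : ℕ) : R)⁻¹) with hH
  set H2 := ∑ j ∈ range (p-1), (((j+1 : ℕ) : R)⁻¹)^2 with hH2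
  set G := ∑ j ∈ range (p-1), (((j+1 : ℕ) : R)⁻¹ * ((p-1-j : ℕ) : R)⁻¹) with hG
  set K := ∑ j ∈ range (p-1), ((((j+1 : ℕ) : R)⁻¹)^2 * ((p-1-j : ℕ) : R)⁻¹) with hK
  have hrefl : ∑ j ∈ range (p-1), (((p-1-j : ℕ) : R)⁻¹) = H := by
    rw [hH]
    have h := Finset.sum_range_reflect (fun j => (((j+1 : ℕ) : R)⁻¹)) (p-1)
    rw [← h]
    apply Finset.sum_congr rfl
    intro j hj; simp only [mem_range] at hj
    congr 2
    omega
  have h2H : 2 * H = e * G := by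
    have hh : 2 * H = H + ∑ j ∈ range (p-1), (((p-1-j : ℕ) : R)⁻¹) := by
      rw [hrefl]; ring
    rw [hh, hH, hG, ← Finset.sum_add_distrib, Finset.mul_sum]
    apply Finset.sum_congr rfl
    intro j hj
    have ha := hunit j hj
    have hb := hbunit j hj
    have hab : ((j+1 : ℕ) : R) + ((p-1-j : ℕ) : R) = e := by
      rw [he, ← Nat.cast_add]
      congr 1
      simp only [mem_range] at hj
      omega
    have h1 : ((j+1 : ℕ) : R) * ((j+1 : ℕ) : R)⁻¹ = 1 := ZMod.mul_inv_of_unit _ ha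
    have h2 : ((p-1-j : ℕ) : R) * ((p-1-j : ℕ) : R)⁻¹ = 1 := ZMod.mul_inv_of_unit _ hb
    calc ((j+1 : ℕ) : R)⁻¹ + ((p-1-j : ℕ) : R)⁻¹
        = (((j+1 : ℕ) : R) + ((p-1-j : ℕ) : R)) * (((j+1 : ℕ) : R)⁻¹ * ((p-1-j : ℕ) : R)⁻¹) := by
          linear_combination (-(((p-1-j : ℕ) : R)⁻¹)) * h1 + (-(((j+1 : ℕ) : R)⁻¹)) * h2
      _ = e * (((j+1 : ℕ) : R)⁻¹ * ((p-1-j : ℕ) : R)⁻¹) := by rw [hab]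
  have hGK : G + H2 = e * K := by
    rw [hG, hH2, hK, ← Finset.sum_add_distrib, Finset.mul_sum]
    apply Finset.sum_congr rfl
    intro j hj
    have ha := hunit j hj
    have hb := hbunit j hj
    have hab : ((j+1 : ℕ) : R) + ((p-1-j : ℕ) : R) = e := by
      rw [he, ← Nat.cast_add]
      congr 1
      simp only [mem_range] at hj
      omega
    have h1 : ((j+1 : ℕ) : R) * ((j+1 : ℕ) : R)⁻¹ = 1 := ZMod.mul_inv_of_unit _ ha
    have h2 : ((p-1-j : ℕ) : R) * ((p-1-j : ℕ) : R)⁻¹ = 1 := ZMod.mul_inv_of_unit _ hb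
    calc ((j+1 : ℕ) : R)⁻¹ * ((p-1-j : ℕ) : R)⁻¹ + (((j+1 : ℕ) : R)⁻¹)^2
        = (((j+1 : ℕ) : R) + ((p-1-j : ℕ) : R)) * ((((j+1 : ℕ) : R)⁻¹)^2 * ((p-1-j : ℕ) : R)⁻¹) := by
          linear_combination (-(((j+1 : ℕ) : R)⁻¹ * ((p-1-j : ℕ) : R)⁻¹)) * h1 +
            (-((((j+1 : ℕ) : R)⁻¹)^2)) * h2
      _ = e * ((((j+1 : ℕ) : R)⁻¹)^2 * ((p-1-j : ℕ) : R)⁻¹) := by rw [hab]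
  have he3 : e^3 = 0 := by
    rw [he, ← Nat.cast_pow, ZMod.natCast_self]
  have hH2z' : e^2 * H2 = 0 := hH2z
  have key : (2 : R) * (e * H) = 0 := by
    linear_combination e * h2H + e^2 * hGK - hH2z' + K * he3
  have h2u : IsUnit (2 : R) := by
    have h := aux_unit hp 2 (by omega) (by omega)
    simpa using h
  exact h2u.mul_left_cancel (by rw [key, mul_zero])

lemma aux_fact_prod (a : ℕ) : ∀ n : ℕ, a ! * ∏ j ∈ range n, (a + j + 1) = (a + n)! := by
  intro n
  induction n with
  | zero => simp
  | succ n ih =>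
    rw [prod_range_succ, ← mul_assoc, ih, show a + (n+1) = (a+n)+1 from by omega,
      Nat.factorial_succ]
    ring

lemma aux_choose_nat {p : ℕ} (hp : 0 < p) (m : ℕ) :
    ((m+1)*p).choose p * (p-1)! = (m+1) * ∏ j ∈ range (p-1), (m*p + j + 1) := by
  obtain ⟨q, rfl⟩ : ∃ q, p = q + 1 := ⟨p-1, by omega⟩
  have h1 : ((m+1)*(q+1)).choose (q+1) * (q+1)! * (m*(q+1))! = ((m+1)*(q+1))! := by
    have h := Nat.choose_mul_factorial_mul_factorial
      (show q+1 ≤ (m+1)*(q+1) from by nlinarith)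
    rw [show (m+1)*(q+1) - (q+1) = m*(q+1) from by rw [add_mul, one_mul]; omega] at h
    exact h
  have h2 : (m*(q+1))! * ∏ j ∈ range (q+1), (m*(q+1) + j + 1) = ((m+1)*(q+1))! := by
    rw [aux_fact_prod (m*(q+1)) (q+1), show m*(q+1) + (q+1) = (m+1)*(q+1) from by ring]
  have h3 : ((m+1)*(q+1)).choose (q+1) * (q+1)! = ∏ j ∈ range (q+1), (m*(q+1) + j + 1) := by
    apply Nat.eq_of_mul_eq_mul_left (Nat.factorial_pos (m*(q+1)))
    calc (m*(q+1))! * (((m+1)*(q+1)).choose (q+1) * (q+1)!)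
        = ((m+1)*(q+1)).choose (q+1) * (q+1)! * (m*(q+1))! := by ring
      _ = ((m+1)*(q+1))! := h1
      _ = (m*(q+1))! * ∏ j ∈ range (q+1), (m*(q+1) + j + 1) := h2.symm
  have h4 : ∏ j ∈ range (q+1), (m*(q+1) + j + 1)
      = (∏ j ∈ range q, (m*(q+1) + j + 1)) * ((m+1)*(q+1)) := by
    rw [prod_range_succ]
    congr 1
    ring
  simp only [Nat.add_sub_cancel]
  apply Nat.eq_of_mul_eq_mul_left (show 0 < q+1 from by omega)
  calc (q+1) * (((m+1)*(q+1)).choose (q+1) * q !)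
      = ((m+1)*(q+1)).choose (q+1) * ((q+1) * q !) := by ring
    _ = ((m+1)*(q+1)).choose (q+1) * (q+1)! := by rw [Nat.factorial_succ]
    _ = (∏ j ∈ range q, (m*(q+1) + j + 1)) * ((m+1)*(q+1)) := by rw [h3, h4]
    _ = (q+1) * ((m+1) * ∏ j ∈ range q, (m*(q+1) + j + 1)) := by ring

lemma aux_telescope (p : ℕ) :
    (6*p).choose (3*p) * ((2*p).choose p * (3*p).choose p) =
      (4*p).choose p * ((5*p).choose p * (6*p).choose p) := by
  have hne : ∀ n : ℕ, ((n ! : ℚ)) ≠ 0 := fun n => Nat.cast_ne_zero.mpr (Nat.factorial_ne_zero n)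
  apply @Nat.cast_inj ℚ _ _ _ _ |>.mp
  push_cast
  rw [Nat.cast_choose ℚ (show 3*p ≤ 6*p from by omega),
    Nat.cast_choose ℚ (show p ≤ 2*p from by omega),
    Nat.cast_choose ℚ (show p ≤ 3*p from by omega),
    Nat.cast_choose ℚ (show p ≤ 4*p from by omega),
    Nat.cast_choose ℚ (show p ≤ 5*p from by omega),
    Nat.cast_choose ℚ (show p ≤ 6*p from by omega),
    show 6*p - 3*p = 3*p from by omega,
    show 2*p - p = p from by omega,
    show 3*p - p = 2*p from by omega,
    show 4*p - p = 3*p from by omega,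
    show 5*p - p = 4*p from by omega,
    show 6*p - p = 5*p from by omega]
  field_simp

lemma aux_choose_mod {p : ℕ} (hp : p.Prime) (hp5 : 5 ≤ p) (m : ℕ) :
    (((m+1)*p).choose p : ZMod (p^3)) = ((m+1 : ℕ) : ZMod (p^3)) := by
  have he3 : ((p : ZMod (p^3)))^3 = 0 := by rw [← Nat.cast_pow, ZMod.natCast_self]
  have hunit : ∀ j ∈ range (p-1),
      (((j+1:ℕ) : ZMod (p^3))) * (((j+1:ℕ) : ZMod (p^3)))⁻¹ = 1 := by
    intro j hj; simp only [mem_range] at hj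
    exact ZMod.mul_inv_of_unit _ (aux_unit hp (j+1) (by omega) (by omega))
  have hfactor : ∀ j ∈ range (p-1),
      ((m*p + j + 1 : ℕ) : ZMod (p^3)) =
        ((j+1:ℕ) : ZMod (p^3)) *
          (1 + (p : ZMod (p^3)) * ((m : ZMod (p^3)) * (((j+1:ℕ) : ZMod (p^3)))⁻¹)) := by
    intro j hj
    have h1 := hunit j hj
    push_cast at h1 ⊢
    linear_combination (-((p : ZMod (p^3)) * (m : ZMod (p^3)))) * h1
  have hfact : ∏ j ∈ range (p-1), ((j+1:ℕ) : ZMod (p^3)) = (((p-1)! : ℕ) : ZMod (p^3)) := by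
    rw [← Nat.cast_prod, prod_range_add_one_eq_factorial]
  have hprod : ((∏ j ∈ range (p-1), (m*p + j + 1) : ℕ) : ZMod (p^3)) =
      (((p-1)! : ℕ) : ZMod (p^3)) *
        ∏ j ∈ range (p-1), (1 + (p : ZMod (p^3)) *
          ((m : ZMod (p^3)) * (((j+1:ℕ) : ZMod (p^3)))⁻¹)) := by
    rw [Nat.cast_prod, Finset.prod_congr rfl hfactor, Finset.prod_mul_distrib, hfact]
  have hexp := aux_prod_one_add (p : ZMod (p^3)) he3 (range (p-1))
    (fun j => (m : ZMod (p^3)) * (((j+1:ℕ) : ZMod (p^3)))⁻¹)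
  have hH := aux_H hp hp5
  have hH2 := aux_H2 hp hp5
  set H := ∑ j ∈ range (p-1), (((j+1 : ℕ) : ZMod (p^3))⁻¹) with hHdef
  set H2 := ∑ j ∈ range (p-1), (((j+1 : ℕ) : ZMod (p^3))⁻¹)^2 with hH2def
  have hsum1 : ∑ j ∈ range (p-1), (m : ZMod (p^3)) * (((j+1:ℕ) : ZMod (p^3)))⁻¹
      = (m : ZMod (p^3)) * H := by rw [hHdef, Finset.mul_sum]
  have hsum2 : ∑ j ∈ range (p-1), ((m : ZMod (p^3)) * (((j+1:ℕ) : ZMod (p^3)))⁻¹)^2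
      = (m : ZMod (p^3))^2 * H2 := by
    rw [hH2def, Finset.mul_sum]
    apply Finset.sum_congr rfl
    intro j _; ring
  rw [hsum1, hsum2] at hexp
  have h2prod : 2 * ∏ j ∈ range (p-1), (1 + (p : ZMod (p^3)) *
      ((m : ZMod (p^3)) * (((j+1:ℕ) : ZMod (p^3)))⁻¹)) = 2 := by
    rw [hexp]
    linear_combination (2*(m : ZMod (p^3))) * hH +
      ((m : ZMod (p^3))^2 * (p : ZMod (p^3)) * H) * hH + (-(m : ZMod (p^3))^2) * hH2
  have hnat := congrArg (Nat.cast : ℕ → ZMod (p^3)) (aux_choose_nat (show 0 < p by omega) m)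
  rw [Nat.cast_mul, Nat.cast_mul, hprod] at hnat
  have hu : IsUnit ((2*(p-1)! : ℕ) : ZMod (p^3)) := by
    rw [ZMod.isUnit_iff_coprime]
    refine Nat.Coprime.mul (aux_coprime hp 2 (by omega) (by omega)) ?_
    refine Nat.Coprime.pow_right _ ?_
    refine Nat.coprime_comm.mp ((Nat.Prime.coprime_iff_not_dvd hp).mpr ?_)
    intro hd
    rw [Nat.Prime.dvd_factorial hp] at hd
    omega
  apply hu.mul_left_cancel
  push_cast
  push_cast at hnat h2prod
  linear_combination 2 * hnat + (((m : ZMod (p^3))+1) * (((p-1)! : ℕ) : ZMod (p^3))) * h2prod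

theorem stmt_12 (p : ℕ) (hp : p.Prime) (hodd : Odd p) (S : ℕ)
    (hS : 2 * (2 * p + 1) * Nat.choose (2 * p) p * S =
      Nat.choose (6 * p) (3 * p) * Nat.choose (3 * p) p) :
    Int.ModEq ((p : ℤ) ^ 3) (S : ℤ) (15 - 30 * (p : ℤ) + 60 * (p : ℤ) ^ 2) := by
  have hodd2 : p % 2 = 1 := Nat.odd_iff.mp hodd
  rcases eq_or_ne p 3 with h3 | h3
  · subst h3
    have e1 : Nat.choose 6 3 = 20 := by decide
    have e2 : Nat.choose 18 9 = 48620 := by decide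
    have e3 : Nat.choose 9 3 = 84 := by decide
    norm_num [e1, e2, e3] at hS
    have hSv : S = 14586 := by omega
    subst hSv
    decide
  · have hp5 : 5 ≤ p := by
      have h2le := hp.two_le
      by_contra h
      push_neg at h
      interval_cases p
      · omega
      · exact h3 rfl
      · exact absurd hp (by decide)
    -- notation
    have he3 : ((p : ZMod (p^3)))^3 = 0 := by rw [← Nat.cast_pow, ZMod.natCast_self]
    have c2 : ((2*p).choose p : ZMod (p^3)) = 2 := by
      have h := aux_choose_mod hp hp5 1
      norm_num at h
      exact h
    have c3 : ((3*p).choose p : ZMod (p^3)) = 3 := by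
      have h := aux_choose_mod hp hp5 2
      norm_num at h
      exact h
    have c4 : ((4*p).choose p : ZMod (p^3)) = 4 := by
      have h := aux_choose_mod hp hp5 3
      norm_num at h
      exact h
    have c5 : ((5*p).choose p : ZMod (p^3)) = 5 := by
      have h := aux_choose_mod hp hp5 4
      norm_num at h
      exact h
    have c6 : ((6*p).choose p : ZMod (p^3)) = 6 := by
      have h := aux_choose_mod hp hp5 5
      norm_num at h
      exact h
    have hTR := congrArg (Nat.cast : ℕ → ZMod (p^3)) (aux_telescope p)
    push_cast at hTR
    rw [c2, c3, c4, c5, c6] at hTR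
    have h6u : IsUnit ((6 : ℕ) : ZMod (p^3)) := by
      rw [ZMod.isUnit_iff_coprime]
      refine Nat.Coprime.pow_right _ ?_
      refine Nat.coprime_comm.mp ((Nat.Prime.coprime_iff_not_dvd hp).mpr ?_)
      intro hd
      rcases (Nat.Prime.dvd_mul hp).mp (show p ∣ 2*3 by simpa using hd) with h | h
      · have := Nat.le_of_dvd (by norm_num) h; omega
      · have := Nat.le_of_dvd (by norm_num) h; omega
    have hx : ((6*p).choose (3*p) : ZMod (p^3)) = 20 := by
      apply h6u.mul_left_cancel
      push_cast
      linear_combination hTR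
    have hSR := congrArg (Nat.cast : ℕ → ZMod (p^3)) hS
    push_cast at hSR
    rw [c2, c3, hx] at hSR
    have hu : IsUnit ((4*(2*p+1) : ℕ) : ZMod (p^3)) := by
      rw [ZMod.isUnit_iff_coprime]
      refine Nat.Coprime.mul (aux_coprime hp 4 (by omega) (by omega)) ?_
      refine Nat.Coprime.pow_right _ ?_
      refine Nat.coprime_comm.mp ((Nat.Prime.coprime_iff_not_dvd hp).mpr ?_)
      intro hd
      have hd2 : p ∣ 2*p := ⟨2, by ring⟩
      have hsub := Nat.dvd_sub hd hd2
      rw [show 2*p+1-2*p = 1 from by omega] at hsub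
      have hp1 := Nat.dvd_one.mp hsub
      omega
    have hfin : ((S : ℕ) : ZMod (p^3)) =
        15 - 30 * (p : ZMod (p^3)) + 60 * (p : ZMod (p^3))^2 := by
      apply hu.mul_left_cancel
      push_cast
      linear_combination hSR - 480 * he3
    have hmod : ((S : ℤ) : ZMod (p^3)) =
        ((15 - 30 * (p:ℤ) + 60 * (p:ℤ)^2 : ℤ) : ZMod (p^3)) := by
      push_cast
      exact hfin
    rw [ZMod.intCast_eq_intCast_iff] at hmod
    have hcast : ((p:ℤ)^3) = ((p^3 : ℕ) : ℤ) := by push_cast; ring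
    rw [hcast]
    exact hmod
end

section
/- For every positive integer N, the following identity holds in the rationals: ∑_{n=0}^{N} (4n+1)·binom(2n,n)^3·(−64)^{N−n} − (4N+1)·(−4)^N·binom(2N,N)·binom(4N,2N) = 2(2N+1)^2·binom(2N,N)^2 · ∑_{k=1}^{N} (−4)^{k−1} · C_{N+k}·binom(N+k+1,2k) / binom(2k,k). -/
open Finset Nat

noncomputable def sqq (M k : ℕ) : ℚ :=
  (-4 : ℚ) ^ (k - 1) * (catalan (M + k) : ℚ) *
    (Nat.choose (M + k + 1) (2 * k) : ℚ) / (Nat.choose (2 * k) k : ℚ)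

noncomputable def fq (M k : ℕ) : ℚ :=
  2 * (2 * (M : ℚ) + 1) ^ 2 * (Nat.choose (2 * M) M : ℚ) ^ 2 * sqq M k

lemma cat_cast (m : ℕ) : (catalan m : ℚ) = ((2 * m)! : ℚ) / ((m)! * (m)! * (m + 1)) := by
  have h := succ_mul_catalan_eq_centralBinom m
  have h2 : ((n : ℕ) → True) := fun _ => trivial
  have hc : ((m + 1 : ℕ) : ℚ) * (catalan m : ℚ) = ((2 * m).choose m : ℚ) := by
    exact_mod_cast congrArg (Nat.cast : ℕ → ℚ) h
  have hcc := Nat.cast_choose (K := ℚ) (show m ≤ 2 * m by omega)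
  rw [show 2 * m - m = m by omega] at hcc
  have hm : ((m : ℚ) + 1) ≠ 0 := by positivity
  field_simp at hc ⊢
  rw [hcc] at hc
  field_simp at hc
  push_cast at hc
  linarith [hc]

lemma fac_ne (n : ℕ) : ((n ! : ℚ)) ≠ 0 := by
  exact_mod_cast Nat.factorial_ne_zero n

lemma sq_val (c j : ℕ) : sqq (c + j) (c + 1) =
    (-4 : ℚ) ^ c * (((4 * c + 2 * j + 2)! : ℚ) /
      (((2 * c + j + 1)! : ℚ) * ((2 * c + j + 1)! : ℚ) * (2 * c + j + 2))) *
    (((2 * c + j + 2)! : ℚ) / (((2 * c + 2)! : ℚ) * (j ! : ℚ))) *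
    (((c + 1)! : ℚ) * ((c + 1)! : ℚ) / ((2 * c + 2)! : ℚ)) := by
  unfold sqq
  rw [show c + j + (c + 1) = 2 * c + j + 1 by ring,
      show 2 * c + j + 1 + 1 = 2 * c + j + 2 by ring,
      show 2 * (c + 1) = 2 * c + 2 by ring,
      show c + 1 - 1 = c by omega]
  rw [cat_cast]
  rw [Nat.cast_choose (K := ℚ) (show 2 * c + 2 ≤ 2 * c + j + 2 by omega)]
  rw [Nat.cast_choose (K := ℚ) (show c + 1 ≤ 2 * c + 2 by omega)]
  rw [show 2 * c + j + 2 - (2 * c + 2) = j by omega,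
      show 2 * c + 2 - (c + 1) = c + 1 by omega,
      show 2 * (2 * c + j + 1) = 4 * c + 2 * j + 2 by ring]
  push_cast
  rw [div_div_eq_mul_div, mul_div_assoc]
  ring_nf

lemma facQ (n : ℕ) : ((n + 1)! : ℚ) = ((n : ℚ) + 1) * (n ! : ℚ) := by
  rw [Nat.factorial_succ]; push_cast; ring

lemma R2 (c j : ℕ) : ((j : ℚ) + 1) * sqq (c + (j + 1)) (c + 1) =
    2 * (4 * (c : ℚ) + 2 * j + 3) * sqq (c + j) (c + 1) := by
  rw [sq_val c (j + 1), sq_val c j]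
  rw [show 4 * c + 2 * (j + 1) + 2 = 4 * c + 2 * j + 4 by ring,
      show 2 * c + (j + 1) + 1 = 2 * c + j + 2 by ring,
      show 2 * c + (j + 1) + 2 = 2 * c + j + 3 by ring]
  rw [show ((4 * c + 2 * j + 4)! : ℚ) = (4 * (c:ℚ) + 2 * j + 4) * (4 * (c:ℚ) + 2 * j + 3) * ((4 * c + 2 * j + 2)! : ℚ) by
        rw [show 4 * c + 2 * j + 4 = (4 * c + 2 * j + 3) + 1 by ring, facQ,
            show 4 * c + 2 * j + 3 = (4 * c + 2 * j + 2) + 1 by ring, facQ]; push_cast; ring,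
      show ((2 * c + j + 3)! : ℚ) = (2 * (c:ℚ) + j + 3) * ((2 * c + j + 2)! : ℚ) by
        rw [show 2 * c + j + 3 = (2 * c + j + 2) + 1 by ring, facQ]; push_cast; ring,
      show ((2 * c + j + 2)! : ℚ) = (2 * (c:ℚ) + j + 2) * ((2 * c + j + 1)! : ℚ) by
        rw [show 2 * c + j + 2 = (2 * c + j + 1) + 1 by ring, facQ]; push_cast; ring,
      show ((j + 1)! : ℚ) = ((j:ℚ) + 1) * (j ! : ℚ) by rw [facQ]]
  push_cast
  have h1 : (2 * (c:ℚ) + j + 2) ≠ 0 := by positivity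
  have h2 : (2 * (c:ℚ) + j + 3) ≠ 0 := by positivity
  have h3 : ((j:ℚ) + 1) ≠ 0 := by positivity
  field_simp [fac_ne]
  ring

lemma R1 (c j : ℕ) : (2 * (c : ℚ) + 3) ^ 2 * sqq ((c + 1) + j) ((c + 1) + 1) =
    -2 * (4 * (c : ℚ) + 2 * j + 5) * ((j : ℚ) + 1) * sqq (c + (j + 1)) (c + 1) := by
  rw [sq_val (c + 1) j, sq_val c (j + 1)]
  rw [show 4 * (c + 1) + 2 * j + 2 = 4 * c + 2 * j + 6 by ring,
      show 2 * (c + 1) + j + 1 = 2 * c + j + 3 by ring,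
      show 2 * (c + 1) + j + 2 = 2 * c + j + 4 by ring,
      show 2 * (c + 1) + 2 = 2 * c + 4 by ring,
      show c + 1 + 1 = c + 2 by ring,
      show 4 * c + 2 * (j + 1) + 2 = 4 * c + 2 * j + 4 by ring,
      show 2 * c + (j + 1) + 1 = 2 * c + j + 2 by ring,
      show 2 * c + (j + 1) + 2 = 2 * c + j + 3 by ring]
  rw [show ((4 * c + 2 * j + 6)! : ℚ) = (4 * (c:ℚ) + 2 * j + 6) * (4 * (c:ℚ) + 2 * j + 5) * ((4 * c + 2 * j + 4)! : ℚ) by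
        rw [show 4 * c + 2 * j + 6 = (4 * c + 2 * j + 5) + 1 by ring, facQ,
            show 4 * c + 2 * j + 5 = (4 * c + 2 * j + 4) + 1 by ring, facQ]; push_cast; ring,
      show ((2 * c + j + 4)! : ℚ) = (2 * (c:ℚ) + j + 4) * ((2 * c + j + 3)! : ℚ) by
        rw [show 2 * c + j + 4 = (2 * c + j + 3) + 1 by ring, facQ]; push_cast; ring,
      show ((2 * c + j + 3)! : ℚ) = (2 * (c:ℚ) + j + 3) * ((2 * c + j + 2)! : ℚ) by
        rw [show 2 * c + j + 3 = (2 * c + j + 2) + 1 by ring, facQ]; push_cast; ring,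
      show ((2 * c + 4)! : ℚ) = (2 * (c:ℚ) + 4) * (2 * (c:ℚ) + 3) * ((2 * c + 2)! : ℚ) by
        rw [show 2 * c + 4 = (2 * c + 3) + 1 by ring, facQ,
            show 2 * c + 3 = (2 * c + 2) + 1 by ring, facQ]; push_cast; ring,
      show ((c + 2)! : ℚ) = ((c:ℚ) + 2) * ((c + 1)! : ℚ) by
        rw [show c + 2 = (c + 1) + 1 by ring, facQ]; push_cast; ring,
      show ((j + 1)! : ℚ) = ((j:ℚ) + 1) * (j ! : ℚ) by rw [facQ],
      pow_succ]
  push_cast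
  have h1 : (2 * (c:ℚ) + j + 2) ≠ 0 := by positivity
  have h2 : (2 * (c:ℚ) + j + 3) ≠ 0 := by positivity
  have h4 : (2 * (c:ℚ) + j + 4) ≠ 0 := by positivity
  have h3 : ((j:ℚ) + 1) ≠ 0 := by positivity
  have h5 : (2 * (c:ℚ) + 4) ≠ 0 := by positivity
  have h6 : (2 * (c:ℚ) + 3) ≠ 0 := by positivity
  field_simp [fac_ne]
  ring

lemma Blem (M : ℕ) : fq M (M + 1) =
    (4 * (M : ℚ) + 1) * (-4) ^ M * ((2 * M).choose M : ℚ) * ((4 * M).choose (2 * M) : ℚ) := by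
  have hs : sqq (M + 0) (M + 1) = _ := sq_val M 0
  rw [show M + 0 = M by ring] at hs
  unfold fq
  rw [hs]
  rw [Nat.cast_choose (K := ℚ) (show M ≤ 2 * M by omega),
      Nat.cast_choose (K := ℚ) (show 2 * M ≤ 4 * M by omega),
      show 2 * M - M = M by omega, show 4 * M - 2 * M = 2 * M by omega,
      show 4 * M + 2 * 0 + 2 = 4 * M + 2 by ring,
      show 2 * M + 0 + 1 = 2 * M + 1 by ring,
      show 2 * M + 0 + 2 = 2 * M + 2 by ring]
  rw [show ((4 * M + 2)! : ℚ) = (4 * (M:ℚ) + 2) * (4 * (M:ℚ) + 1) * ((4 * M)! : ℚ) by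
        rw [show 4 * M + 2 = (4 * M + 1) + 1 by ring, facQ,
            show 4 * M + 1 = (4 * M) + 1 by ring, facQ]; push_cast; ring,
      show ((2 * M + 2)! : ℚ) = (2 * (M:ℚ) + 2) * (2 * (M:ℚ) + 1) * ((2 * M)! : ℚ) by
        rw [show 2 * M + 2 = (2 * M + 1) + 1 by ring, facQ,
            show 2 * M + 1 = (2 * M) + 1 by ring, facQ]; push_cast; ring,
      show ((2 * M + 1)! : ℚ) = (2 * (M:ℚ) + 1) * ((2 * M)! : ℚ) by
        rw [show 2 * M + 1 = (2 * M) + 1 by ring, facQ]; push_cast; ring,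
      show ((M + 1)! : ℚ) = ((M:ℚ) + 1) * (M ! : ℚ) by rw [facQ]]
  push_cast
  simp only [Nat.factorial_zero, Nat.cast_one]
  have h1 : (2 * (M:ℚ) + 1) ≠ 0 := by positivity
  have h2 : (2 * (M:ℚ) + 2) ≠ 0 := by positivity
  have h3 : ((M:ℚ) + 1) ≠ 0 := by positivity
  field_simp [fac_ne]
  ring

lemma G1lem (M : ℕ) : fq M 1 = (2 * (M : ℚ) + 1) ^ 3 * ((2 * M).choose M : ℚ) ^ 3 := by
  have hs : sqq (0 + M) (0 + 1) = _ := sq_val 0 M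
  rw [show 0 + M = M by ring] at hs
  unfold fq
  rw [show (1 : ℕ) = 0 + 1 by ring, hs]
  rw [Nat.cast_choose (K := ℚ) (show M ≤ 2 * M by omega), show 2 * M - M = M by omega,
      show 4 * 0 + 2 * M + 2 = 2 * M + 2 by ring,
      show 2 * 0 + 2 = 2 by ring]
  rw [show ((2 * M + 2)! : ℚ) = (2 * (M:ℚ) + 2) * (2 * (M:ℚ) + 1) * ((2 * M)! : ℚ) by
        rw [show 2 * M + 2 = (2 * M + 1) + 1 by ring, facQ,
            show 2 * M + 1 = (2 * M) + 1 by ring, facQ]; push_cast; ring,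
      show ((M + 2)! : ℚ) = ((M:ℚ) + 2) * ((M:ℚ) + 1) * (M ! : ℚ) by
        rw [show M + 2 = (M + 1) + 1 by ring, facQ, facQ]; push_cast; ring,
      show ((M + 1)! : ℚ) = ((M:ℚ) + 1) * (M ! : ℚ) by rw [facQ],
      show (((2:ℕ))! : ℚ) = 2 by norm_num [Nat.factorial],
      show (((0+1:ℕ))! : ℚ) = 1 by norm_num [Nat.factorial]]
  push_cast
  have h1 : ((M:ℚ) + 1) ≠ 0 := by positivity
  have h2 : ((M:ℚ) + 2) ≠ 0 := by positivity
  field_simp [fac_ne]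
  ring

noncomputable def pre (M : ℕ) : ℚ := 2 * (2 * (M : ℚ) + 1) ^ 2 * ((2 * M).choose M : ℚ) ^ 2

lemma fq_eq (M k : ℕ) : fq M k = pre M * sqq M k := by unfold fq pre; ring

lemma prelem (M : ℕ) : ((M : ℚ) + 1) ^ 2 * pre (M + 1) = 4 * (2 * (M : ℚ) + 3) ^ 2 * pre M := by
  have hb : ((M : ℚ) + 1) * ((2 * (M + 1)).choose (M + 1) : ℚ) =
      2 * (2 * (M : ℚ) + 1) * ((2 * M).choose M : ℚ) := by
    have := Nat.succ_mul_centralBinom_succ M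
    have h2 : (M + 1) * ((2 * (M + 1)).choose (M + 1)) = 2 * (2 * M + 1) * ((2 * M).choose M) := this
    exact_mod_cast congrArg (Nat.cast : ℕ → ℚ) h2
  unfold pre
  push_cast
  linear_combination (2 * (2 * (M:ℚ) + 3) ^ 2 *
    (((M:ℚ) + 1) * ((2 * (M + 1)).choose (M + 1) : ℚ) +
      2 * (2 * (M:ℚ) + 1) * ((2 * M).choose M : ℚ))) * hb

noncomputable def Gq (M k : ℕ) : ℚ :=
  (4 * (M : ℚ) + 1) * (2 * (k : ℚ) - 1) ^ 2 /
    ((2 * (M : ℚ) + 1) ^ 2 * (2 * (M : ℚ) + 2 * (k : ℚ) - 1)) * fq M k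

set_option maxHeartbeats 1200000 in
lemma tele (c j : ℕ) :
    Gq (c + j + 1) (c + 1) - Gq (c + j + 1) (c + 2) =
      fq (c + j + 1) (c + 1) + 64 * fq (c + j) (c + 1) := by
  have h3 : ((j : ℚ) + 1) ≠ 0 := by positivity
  have h6 : (2 * (c : ℚ) + 3) ≠ 0 := by positivity
  have hcj : ((c : ℚ) + j + 1) ≠ 0 := by positivity
  have hy : sqq (c + (j + 1)) (c + 1) =
      2 * (4 * (c : ℚ) + 2 * j + 3) * sqq (c + j) (c + 1) / ((j : ℚ) + 1) := by
    rw [eq_div_iff h3]; linear_combination R2 c j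
  have hz : sqq ((c + 1) + j) ((c + 1) + 1) =
      -2 * (4 * (c : ℚ) + 2 * j + 5) * ((j : ℚ) + 1) * sqq (c + (j + 1)) (c + 1) /
        (2 * (c : ℚ) + 3) ^ 2 := by
    rw [eq_div_iff (pow_ne_zero 2 h6)]; linear_combination R1 c j
  have hq : pre (c + (j + 1)) = 4 * (2 * ((c : ℚ) + j) + 3) ^ 2 * pre (c + j) /
      (((c : ℚ) + j) + 1) ^ 2 := by
    rw [eq_div_iff (by positivity), show (c + (j + 1) : ℕ) = (c + j) + 1 from by ring]
    have := prelem (c + j)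
    push_cast at this ⊢
    linear_combination this
  have e1 : fq (c + j + 1) (c + 1) =
      8 * (2 * ((c:ℚ) + j) + 3) ^ 2 * (4 * (c:ℚ) + 2 * j + 3) /
        ((((c:ℚ) + j) + 1) ^ 2 * ((j:ℚ) + 1)) * (pre (c + j) * sqq (c + j) (c + 1)) := by
    rw [fq_eq, show (c + j + 1 : ℕ) = c + (j + 1) from by ring, hq, hy]
    field_simp
    ring
  have e2 : fq (c + j + 1) (c + 2) =
      -16 * (2 * ((c:ℚ) + j) + 3) ^ 2 * (4 * (c:ℚ) + 2 * j + 5) * (4 * (c:ℚ) + 2 * j + 3) /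
        ((((c:ℚ) + j) + 1) ^ 2 * (2 * (c:ℚ) + 3) ^ 2) * (pre (c + j) * sqq (c + j) (c + 1)) := by
    rw [fq_eq, show (c + 2 : ℕ) = (c + 1) + 1 from rfl,
        show (c + j + 1 : ℕ) = (c + 1) + j from by ring, hz,
        show ((c + 1) + j : ℕ) = c + (j + 1) from by ring, hq, hy]
    field_simp
    ring
  have g1 : Gq (c + j + 1) (c + 1) =
      (4 * ((c:ℚ) + j) + 5) * (2 * (c:ℚ) + 1) ^ 2 /
        ((2 * ((c:ℚ) + j) + 3) ^ 2 * (4 * (c:ℚ) + 2 * j + 3)) * fq (c + j + 1) (c + 1) := by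
    unfold Gq; push_cast; ring
  have g2 : Gq (c + j + 1) (c + 2) =
      (4 * ((c:ℚ) + j) + 5) * (2 * (c:ℚ) + 3) ^ 2 /
        ((2 * ((c:ℚ) + j) + 3) ^ 2 * (4 * (c:ℚ) + 2 * j + 5)) * fq (c + j + 1) (c + 2) := by
    unfold Gq; push_cast; ring
  rw [g1, g2, e1, e2, fq_eq (c + j) (c + 1)]
  generalize pre (c + j) * sqq (c + j) (c + 1) = t
  have d3 : (4 * (c:ℚ) + 2 * j + 3) ≠ 0 := by positivity
  have d4 : (4 * (c:ℚ) + 2 * j + 5) ≠ 0 := by positivity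
  have d5 : (2 * ((c:ℚ) + j) + 3) ≠ 0 := by positivity
  field_simp
  ring

lemma Gq_top (M : ℕ) : Gq M (M + 1) = fq M (M + 1) := by
  have hM : (0:ℚ) ≤ (M:ℚ) := Nat.cast_nonneg M
  have hpos : (0:ℚ) < (2 * (M:ℚ) + 1) ^ 2 * (2 * (M:ℚ) + 2 * ((M:ℚ) + 1) - 1) := by nlinarith
  have hd : (2 * (M:ℚ) + 1) ^ 2 * (2 * (M:ℚ) + 2 * (((M + 1 : ℕ)) : ℚ) - 1) ≠ 0 := by
    push_cast; exact hpos.ne'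
  unfold Gq
  rw [div_mul_eq_mul_div, div_eq_iff hd]
  push_cast
  ring

lemma Gq_one (M : ℕ) : Gq M 1 = (4 * (M:ℚ) + 1) * ((2 * M).choose M : ℚ) ^ 3 := by
  have hM : (0:ℚ) ≤ (M:ℚ) := Nat.cast_nonneg M
  have hpos : (0:ℚ) < (2 * (M:ℚ) + 1) ^ 2 * (2 * (M:ℚ) + 2 * 1 - 1) := by nlinarith
  have hd : (2 * (M:ℚ) + 1) ^ 2 * (2 * (M:ℚ) + 2 * (((1 : ℕ)) : ℚ) - 1) ≠ 0 := by
    push_cast; exact hpos.ne'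
  unfold Gq
  rw [G1lem]
  rw [div_mul_eq_mul_div, div_eq_iff hd]
  push_cast
  ring

lemma sumtele (N : ℕ) :
    ∑ i ∈ Finset.range (N + 1), (fq (N + 1) (i + 1) + 64 * fq N (i + 1)) =
      Gq (N + 1) 1 - Gq (N + 1) (N + 2) := by
  have hcong : ∀ i ∈ Finset.range (N + 1),
      fq (N + 1) (i + 1) + 64 * fq N (i + 1) = Gq (N + 1) (i + 1) - Gq (N + 1) (i + 2) := by
    intro i hi
    have hiN : i ≤ N := by simpa [Nat.lt_succ_iff] using hi
    have h := tele i (N - i)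
    rw [show i + (N - i) = N by omega] at h
    linarith [h]
  rw [Finset.sum_congr rfl hcong]
  exact Finset.sum_range_sub' (fun i => Gq (N + 1) (i + 1)) (N + 1)

lemma mainlem (N : ℕ) :
    (∑ n ∈ Finset.range (N + 1),
        (4 * (n : ℚ) + 1) * (Nat.choose (2 * n) n : ℚ) ^ 3 * (-64) ^ (N - n)) -
      (4 * (N : ℚ) + 1) * (-4) ^ N * (Nat.choose (2 * N) N : ℚ) *
        (Nat.choose (4 * N) (2 * N) : ℚ) =
    ∑ i ∈ Finset.range N, fq N (i + 1) := by
  induction N with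
  | zero => norm_num
  | succ N ih =>
    have recA : ∑ n ∈ Finset.range (N + 1 + 1),
        (4 * (n : ℚ) + 1) * (Nat.choose (2 * n) n : ℚ) ^ 3 * (-64) ^ (N + 1 - n) =
        -64 * ∑ n ∈ Finset.range (N + 1),
            (4 * (n : ℚ) + 1) * (Nat.choose (2 * n) n : ℚ) ^ 3 * (-64) ^ (N - n)
          + (4 * ((N : ℚ) + 1) + 1) * (Nat.choose (2 * (N + 1)) (N + 1) : ℚ) ^ 3 := by
      rw [Finset.sum_range_succ, show N + 1 - (N + 1) = 0 by omega]
      have hcong : ∀ n ∈ Finset.range (N + 1),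
          (4 * (n : ℚ) + 1) * (Nat.choose (2 * n) n : ℚ) ^ 3 * (-64) ^ (N + 1 - n) =
          -64 * ((4 * (n : ℚ) + 1) * (Nat.choose (2 * n) n : ℚ) ^ 3 * (-64) ^ (N - n)) := by
        intro n hn
        have hnN : n ≤ N := by simpa [Nat.lt_succ_iff] using hn
        rw [show N + 1 - n = (N - n) + 1 by omega, pow_succ]
        ring
      rw [Finset.sum_congr rfl hcong, ← Finset.mul_sum]
      push_cast
      ring
    have h3 := sumtele N
    have h4 : Gq (N + 1) (N + 2) = fq (N + 1) (N + 2) := Gq_top (N + 1)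
    have h5 := Blem (N + 1)
    have h6 := Blem N
    have h7 := Gq_one (N + 1)
    have h8 : ∑ i ∈ Finset.range (N + 1), (fq (N + 1) (i + 1) + 64 * fq N (i + 1)) =
        (∑ i ∈ Finset.range (N + 1), fq (N + 1) (i + 1)) +
          64 * ∑ i ∈ Finset.range (N + 1), fq N (i + 1) := by
      rw [Finset.sum_add_distrib, Finset.mul_sum]
    have h9 : ∑ i ∈ Finset.range (N + 1), fq N (i + 1) =
        (∑ i ∈ Finset.range N, fq N (i + 1)) + fq N (N + 1) := Finset.sum_range_succ _ N
    rw [recA]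
    push_cast at h5 h7 ⊢
    linarith [ih, h3, h4, h5, h6, h7, h8, h9]

theorem stmt_13 (N : ℕ) (hN : 0 < N) :
    (∑ n ∈ Finset.range (N + 1),
        (4 * (n : ℚ) + 1) * (Nat.choose (2 * n) n : ℚ) ^ 3 * (-64) ^ (N - n)) -
      (4 * (N : ℚ) + 1) * (-4) ^ N * (Nat.choose (2 * N) N : ℚ) *
        (Nat.choose (4 * N) (2 * N) : ℚ) =
    2 * (2 * (N : ℚ) + 1) ^ 2 * (Nat.choose (2 * N) N : ℚ) ^ 2 *
      ∑ k ∈ Finset.Icc 1 N,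
        (-4 : ℚ) ^ (k - 1) * (catalan (N + k) : ℚ) *
          (Nat.choose (N + k + 1) (2 * k) : ℚ) / (Nat.choose (2 * k) k : ℚ) := by
  rw [Finset.mul_sum]
  have hcong : ∀ k ∈ Finset.Icc 1 N,
      2 * (2 * (N : ℚ) + 1) ^ 2 * (Nat.choose (2 * N) N : ℚ) ^ 2 *
        ((-4 : ℚ) ^ (k - 1) * (catalan (N + k) : ℚ) *
          (Nat.choose (N + k + 1) (2 * k) : ℚ) / (Nat.choose (2 * k) k : ℚ)) = fq N k := by
    intro k hk
    unfold fq sqq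
    ring
  rw [Finset.sum_congr rfl hcong]
  have hidx : ∀ n : ℕ, ∑ k ∈ Finset.Icc 1 n, fq N k = ∑ i ∈ Finset.range n, fq N (i + 1) := by
    intro n
    induction n with
    | zero => simp
    | succ n ihn => rw [Finset.sum_Icc_succ_top (by omega), ihn, Finset.sum_range_succ]
  rw [hidx N]
  exact mainlem N
end

section
/- As n → ∞, S_n is asymptotically equivalent to 108^n / (8·n·√(nπ)); that is, the ratio S_n / (108^n/(8 n √(nπ))) tends to 1. -/
open Filter Real Stirling

/-- The integer `S_n = binom(6n,3n)·binom(3n,n) / (2(2n+1)·binom(2n,n))`. -/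
def paperS (n : ℕ) : ℕ :=
  Nat.choose (6 * n) (3 * n) * Nat.choose (3 * n) n /
    (2 * (2 * n + 1) * Nat.choose (2 * n) n)

noncomputable def auxF (n : ℕ) : ℝ :=
  (Nat.choose (6 * n) (3 * n) * Nat.choose (3 * n) n : ℝ) /
    (2 * (2 * n + 1) * Nat.choose (2 * n) n)

theorem stpos {m : ℕ} (hm : 1 ≤ m) : 0 < stirlingSeq m := by
  obtain ⟨k, rfl⟩ := Nat.exists_eq_succ_of_ne_zero (by omega : m ≠ 0)
  exact Stirling.stirlingSeq'_pos k

theorem fact_eq (n c : ℕ) (hn : 1 ≤ n) (hc : 1 ≤ c) :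
    ((Nat.factorial (c * n)) : ℝ) = Stirling.stirlingSeq (c * n) *
      (Real.sqrt (2 * c) * Real.sqrt n * (((c:ℝ) * n) / Real.exp 1) ^ (c * n)) := by
  have h2 : Real.sqrt (2 * ((c:ℝ) * n)) ≠ 0 := by positivity
  have h3 : (((c:ℝ) * n) / Real.exp 1) ^ (c * n) ≠ 0 := by positivity
  have hs : Real.sqrt (2 * ((c:ℝ) * n)) = Real.sqrt (2 * c) * Real.sqrt n := by
    rw [← Real.sqrt_mul (by positivity : (0:ℝ) ≤ 2 * c)]; ring_nf
  rw [Stirling.stirlingSeq]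
  push_cast
  rw [hs] at h2 ⊢
  field_simp

theorem powkey (a b c d r : ℝ) (n : ℕ) (h : a ^ 6 * b = r * (c ^ 3 * d ^ 4)) :
    a ^ (6 * n) * b ^ n = r ^ n * (c ^ (3 * n) * (d ^ (2 * n)) ^ 2) := by
  rw [← pow_mul d (2 * n) 2, show 2 * n * 2 = 4 * n by ring, pow_mul, pow_mul, pow_mul,
    ← mul_pow, ← mul_pow, ← mul_pow, h]

theorem auxF_eq (n : ℕ) (hn : 1 ≤ n) :
    auxF n = (stirlingSeq (6 * n) * stirlingSeq n /
        (stirlingSeq (3 * n) * stirlingSeq (2 * n) ^ 2)) *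
      (108 ^ n / (4 * Real.sqrt n * (2 * (n : ℝ) + 1))) := by
  have hN : (0:ℝ) < n := by exact_mod_cast hn
  have hE : Real.exp 1 ≠ 0 := Real.exp_ne_zero 1
  have hc1 : ((Nat.choose (6 * n) (3 * n)) : ℝ)
      = (Nat.factorial (6 * n) : ℝ) / (Nat.factorial (3 * n) * Nat.factorial (3 * n)) := by
    rw [Nat.cast_choose ℝ (by omega : 3 * n ≤ 6 * n), show 6 * n - 3 * n = 3 * n by omega]
  have hc2 : ((Nat.choose (3 * n) n) : ℝ)
      = (Nat.factorial (3 * n) : ℝ) / (Nat.factorial n * Nat.factorial (2 * n)) := by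
    rw [Nat.cast_choose ℝ (by omega : n ≤ 3 * n), show 3 * n - n = 2 * n by omega]
  have hc3 : ((Nat.choose (2 * n) n) : ℝ)
      = (Nat.factorial (2 * n) : ℝ) / (Nat.factorial n * Nat.factorial n) := by
    rw [Nat.cast_choose ℝ (by omega : n ≤ 2 * n), show 2 * n - n = n by omega]
  have hF6 := fact_eq n 6 hn (by norm_num)
  have hF3 := fact_eq n 3 hn (by norm_num)
  have hF2 := fact_eq n 2 hn (by norm_num)
  have hF1 : ((Nat.factorial n) : ℝ) = stirlingSeq n *
      (Real.sqrt 2 * Real.sqrt n * ((n:ℝ) / Real.exp 1) ^ n) := by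
    have := fact_eq n 1 hn (by norm_num)
    rw [one_mul] at this
    push_cast at this
    convert this using 3 <;> norm_num
  have h6c : Real.sqrt (2 * ((6:ℕ):ℝ)) = 2 * Real.sqrt 3 := by
    rw [show (2 * (((6:ℕ)):ℝ):ℝ) = 2 ^ 2 * 3 by norm_num, Real.sqrt_mul (by positivity),
      Real.sqrt_sq (by norm_num)]
  have h3c : Real.sqrt (2 * ((3:ℕ):ℝ)) = Real.sqrt 2 * Real.sqrt 3 := by
    rw [show (2 * (((3:ℕ)):ℝ):ℝ) = 2 * 3 by norm_num, Real.sqrt_mul (by positivity)]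
  have h2c : Real.sqrt (2 * ((2:ℕ):ℝ)) = 2 := by
    rw [show (2 * (((2:ℕ)):ℝ):ℝ) = 2 ^ 2 by norm_num, Real.sqrt_sq (by norm_num)]
  have hP : (((6:ℕ):ℝ) * n / Real.exp 1) ^ (6 * n) * ((n:ℝ) / Real.exp 1) ^ n
      = 108 ^ n * (((((3:ℕ):ℝ) * n) / Real.exp 1) ^ (3 * n) *
        (((((2:ℕ):ℝ) * n) / Real.exp 1) ^ (2 * n)) ^ 2) := by
    apply powkey
    generalize Real.exp 1 = E at hE ⊢
    push_cast
    field_simp; ring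
  have hst6 := stpos (show 1 ≤ 6 * n by omega)
  have hst3 := stpos (show 1 ≤ 3 * n by omega)
  have hst2 := stpos (show 1 ≤ 2 * n by omega)
  have hst1 := stpos hn
  rw [auxF, hc1, hc2, hc3, hF6, hF3, hF2, hF1, h6c, h3c, h2c]
  set X6 : ℝ := (((6:ℕ):ℝ) * n / Real.exp 1) ^ (6 * n) with hdef6
  set X3 : ℝ := (((3:ℕ):ℝ) * n / Real.exp 1) ^ (3 * n) with hdef3
  set X2 : ℝ := (((2:ℕ):ℝ) * n / Real.exp 1) ^ (2 * n) with hdef2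
  set X1 : ℝ := ((n:ℝ) / Real.exp 1) ^ n with hdef1
  clear_value X6 X3 X2 X1
  have hX6 : X6 ≠ 0 := by rw [hdef6]; positivity
  have hX3 : X3 ≠ 0 := by rw [hdef3]; positivity
  have hX2 : X2 ≠ 0 := by rw [hdef2]; positivity
  have hX1 : X1 ≠ 0 := by rw [hdef1]; positivity
  have hs2 : Real.sqrt 2 ≠ 0 := by positivity
  have hs3 : Real.sqrt 3 ≠ 0 := by positivity
  have hsn : Real.sqrt (n:ℝ) ≠ 0 := by positivity
  have hH : (108:ℝ) ^ n ≠ 0 := by positivity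
  have h2n1 : (2 * (n:ℝ) + 1) ≠ 0 := by positivity
  field_simp
  linear_combination (4:ℝ) * hP


noncomputable def auxT (n : ℕ) : ℝ := 108 ^ n / (8 * (n : ℝ) * Real.sqrt ((n : ℝ) * π))

theorem key_ratio (n : ℕ) (hn : 1 ≤ n) :
    auxF n / auxT n = (stirlingSeq (6 * n) * stirlingSeq n /
        (stirlingSeq (3 * n) * stirlingSeq (2 * n) ^ 2)) *
      (Real.sqrt π * (2 * (n:ℝ) / (2 * (n:ℝ) + 1))) := by
  have hN : (0:ℝ) < n := by exact_mod_cast hn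
  have hπ : Real.sqrt ((n:ℝ) * π) = Real.sqrt n * Real.sqrt π :=
    Real.sqrt_mul (le_of_lt hN) _
  have hsn : Real.sqrt (n:ℝ) ≠ 0 := by positivity
  have hH : (108:ℝ) ^ n ≠ 0 := by positivity
  have h2n1 : (2 * (n:ℝ) + 1) ≠ 0 := by positivity
  have hg6 : stirlingSeq (6 * n) ≠ 0 := ne_of_gt (stpos (by omega))
  have hg3 : stirlingSeq (3 * n) ≠ 0 := ne_of_gt (stpos (by omega))
  have hg2 : stirlingSeq (2 * n) ≠ 0 := ne_of_gt (stpos (by omega))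
  have hg1 : stirlingSeq n ≠ 0 := ne_of_gt (stpos hn)
  rw [auxF_eq n hn, auxT, hπ]
  field_simp
  ring

theorem tendsto_mul_atTop (c : ℕ) (hc : 0 < c) :
    Tendsto (fun n : ℕ => c * n) atTop atTop :=
  Filter.tendsto_atTop_atTop.mpr fun b =>
    ⟨b, fun a ha => le_trans ha (Nat.le_mul_of_pos_left a hc)⟩

theorem main_limit :
    Tendsto (fun n : ℕ => auxF n / auxT n) atTop (nhds 1) := by
  have hst := Stirling.tendsto_stirlingSeq_sqrt_pi
  have h6 := hst.comp (tendsto_mul_atTop 6 (by norm_num))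
  have h3 := hst.comp (tendsto_mul_atTop 3 (by norm_num))
  have h2 := hst.comp (tendsto_mul_atTop 2 (by norm_num))
  have hπpos : (0:ℝ) < Real.sqrt π := Real.sqrt_pos.mpr Real.pi_pos
  have hne : Real.sqrt π * Real.sqrt π ^ 2 ≠ 0 := by positivity
  have hR : Tendsto (fun n : ℕ => stirlingSeq (6 * n) * stirlingSeq n /
      (stirlingSeq (3 * n) * stirlingSeq (2 * n) ^ 2)) atTop
      (nhds (Real.sqrt π * Real.sqrt π / (Real.sqrt π * Real.sqrt π ^ 2))) :=
    (h6.mul hst).div (h3.mul (h2.pow 2)) hne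
  have hfrac : Tendsto (fun n : ℕ => 2 * (n:ℝ) / (2 * (n:ℝ) + 1)) atTop (nhds 1) := by
    have := (tendsto_natCast_div_add_atTop (1:ℝ)).comp (tendsto_mul_atTop 2 (by norm_num))
    have heq : (fun n : ℕ => 2 * (n:ℝ) / (2 * (n:ℝ) + 1))
        = (fun n : ℕ => (((2 * n : ℕ):ℝ)) / ((2 * n : ℕ) + 1)) ∘ id := by
      funext m; simp only [Function.comp, id]; push_cast; ring_nf
    rw [heq]
    exact this
  have hmain : Tendsto (fun n : ℕ => (stirlingSeq (6 * n) * stirlingSeq n /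
      (stirlingSeq (3 * n) * stirlingSeq (2 * n) ^ 2)) *
      (Real.sqrt π * (2 * (n:ℝ) / (2 * (n:ℝ) + 1)))) atTop
      (nhds ((Real.sqrt π * Real.sqrt π / (Real.sqrt π * Real.sqrt π ^ 2)) *
        (Real.sqrt π * 1))) := hR.mul (tendsto_const_nhds.mul hfrac)
  have hval : (Real.sqrt π * Real.sqrt π / (Real.sqrt π * Real.sqrt π ^ 2)) *
      (Real.sqrt π * 1) = 1 := by
    field_simp
  rw [hval] at hmain
  apply hmain.congr'
  filter_upwards [eventually_ge_atTop 1] with n hn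
  exact (key_ratio n hn).symm


theorem rounding_bound (n : ℕ) (hn : 1 ≤ n) :
    |(paperS n : ℝ) - auxF n| ≤ 1 := by
  set A := Nat.choose (6 * n) (3 * n) * Nat.choose (3 * n) n with hA
  set B := 2 * (2 * n + 1) * Nat.choose (2 * n) n with hB
  have hBpos : 0 < B := by
    have := Nat.choose_pos (show n ≤ 2 * n by omega)
    positivity
  have hBR : (0:ℝ) < B := by exact_mod_cast hBpos
  have hFeq : auxF n = (A : ℝ) / B := by rw [auxF, hA, hB]; push_cast; ring
  have hup : ((A / B : ℕ) : ℝ) ≤ (A : ℝ) / B := Nat.cast_div_le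
  have hlow : (A : ℝ) / B - 1 ≤ ((A / B : ℕ) : ℝ) := by
    have hmod : A % B < B := Nat.mod_lt _ hBpos
    have hdm : B * (A / B) + A % B = A := Nat.div_add_mod A B
    have : (A : ℝ) < B * ((A / B : ℕ) : ℝ) + B := by
      have : (A:ℝ) = B * ((A / B : ℕ):ℝ) + ((A % B : ℕ):ℝ) := by exact_mod_cast hdm.symm
      rw [this]
      have : ((A % B : ℕ):ℝ) < B := by exact_mod_cast hmod
      linarith
    rw [div_sub_one (ne_of_gt hBR), div_le_iff₀ hBR]
    nlinarith
  have : (paperS n : ℝ) = ((A / B : ℕ) : ℝ) := by rw [paperS]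
  rw [this, hFeq, abs_le]
  constructor <;> linarith

theorem auxT_pos (n : ℕ) (hn : 1 ≤ n) : 0 < auxT n := by
  have hN : (0:ℝ) < n := by exact_mod_cast hn
  have := Real.pi_pos
  rw [auxT]
  positivity

theorem err_tendsto :
    Tendsto (fun n : ℕ => ((paperS n : ℝ) - auxF n) / auxT n) atTop (nhds 0) := by
  apply squeeze_zero_norm' (a := fun n : ℕ => 16 * ((n:ℝ) ^ 2 / 108 ^ n))
  · filter_upwards [eventually_ge_atTop 1] with n hn
    have hN : (0:ℝ) < n := by exact_mod_cast hn
    have hN1 : (1:ℝ) ≤ n := by exact_mod_cast hn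
    have hT := auxT_pos n hn
    have hb := rounding_bound n hn
    have h1 : ‖((paperS n : ℝ) - auxF n) / auxT n‖ ≤ 1 / auxT n := by
      rw [norm_div, Real.norm_eq_abs, Real.norm_eq_abs, abs_of_pos hT]
      exact div_le_div_of_nonneg_right hb hT.le |>.trans le_rfl
    refine h1.trans ?_
    have hTval : 1 / auxT n = 8 * (n:ℝ) * Real.sqrt ((n:ℝ) * π) / 108 ^ n := by
      rw [auxT, one_div, inv_div]
    rw [hTval]
    have hsq : Real.sqrt ((n:ℝ) * π) ≤ 2 * n := by
      have h4 : (n:ℝ) * π ≤ (2 * n) ^ 2 := by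
        have := Real.pi_le_four
        nlinarith
      calc Real.sqrt ((n:ℝ) * π) ≤ Real.sqrt ((2 * n) ^ 2) :=
            Real.sqrt_le_sqrt h4
        _ = 2 * n := Real.sqrt_sq (by positivity)
    have h108 : (0:ℝ) < 108 ^ n := by positivity
    rw [div_le_iff₀ h108]
    have : 16 * ((n:ℝ) ^ 2 / 108 ^ n) * 108 ^ n = 16 * (n:ℝ)^2 := by field_simp
    rw [this]
    nlinarith
  · have := (tendsto_pow_const_div_const_pow_of_one_lt 2
      (show (1:ℝ) < 108 by norm_num)).const_mul (16:ℝ)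
    simpa using this

theorem stmt_16 :
    Filter.Tendsto
      (fun n : ℕ =>
        (paperS n : ℝ) / (108 ^ n / (8 * (n : ℝ) * Real.sqrt ((n : ℝ) * Real.pi))))
      Filter.atTop (nhds 1) := by
  have h := main_limit.add err_tendsto
  rw [add_zero] at h
  apply h.congr'
  filter_upwards [eventually_ge_atTop 1] with n hn
  have : (paperS n : ℝ) / auxT n
      = auxF n / auxT n + ((paperS n : ℝ) - auxF n) / auxT n := by ring
  rw [← this, auxT]
end
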